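/- arXiv:2006.10670 — 4 statements merged into one kernel-verified Lean document; each statement's English description precedes it below -/
import Mathlib

section
/- Let k ∈ W^{1,1}(0,T) (absolutely continuous with integrable derivative), H : ℝ → ℝ continuously differentiable and convex, and φ : [0,T] → ℝ bounded and measurable. Then for almost every t ∈ [0,T], H'(φ(t)) · d/dt (k*φ)(t) = d/dt (k * (H∘φ))(t) + k(t)(−H(φ(t)) + H'(φ(t))φ(t)) − ∫₀ᵗ k'(s) [ H(φ(t−s)) − H(φ(t)) − H'(φ(t))(φ(t−s) − φ(t)) ] ds. -/
open MeasureTheory intervalIntegral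

section ConvChainAux

open Set Metric Filter Topology


lemma ae_hasDerivAt_primitive {f : ℝ → ℝ} (hf : Integrable f) :
    ∀ᵐ x : ℝ, HasDerivAt (fun τ : ℝ => ∫ s in (0:ℝ)..τ, f s) (f x) x := by
  filter_upwards [IsUnifLocDoublingMeasure.ae_tendsto_average_norm_sub
    (μ := volume) hf.locallyIntegrable 1] with x hx
  have A : Tendsto (fun y : ℝ => ⨍ z in closedBall x |y - x|, ‖f z - f x‖) (𝓝[≠] x) (𝓝 0) := by
    apply hx (w := fun _ => x) (δ := fun y => |y - x|)
    · apply tendsto_nhdsWithin_of_tendsto_nhds_of_eventually_within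
      · have h1 : Tendsto (fun y : ℝ => |y - x|) (𝓝 x) (𝓝 |x - x|) :=
          (continuous_abs.comp (continuous_id.sub continuous_const)).tendsto x
        have h2 : Tendsto (fun y : ℝ => |y - x|) (𝓝 x) (𝓝 0) := by simpa using h1
        exact h2.mono_left nhdsWithin_le_nhds
      · filter_upwards [self_mem_nhdsWithin] with y hy
        have hyx : y ≠ x := hy
        simpa [Set.mem_Ioi, abs_pos, sub_eq_zero] using hyx
    · filter_upwards with y
      simp only [mem_closedBall, dist_self, one_mul]
      positivity
  rw [hasDerivAt_iff_tendsto_slope]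
  rw [tendsto_iff_norm_sub_tendsto_zero]
  apply squeeze_zero' (Eventually.of_forall fun y => norm_nonneg _)
    (g := fun y => 2 * ⨍ z in closedBall x |y - x|, ‖f z - f x‖)
  · filter_upwards [self_mem_nhdsWithin] with y hy
    have hyx : y ≠ x := hy
    have hr : (0:ℝ) < |y - x| := by rwa [abs_pos, sub_ne_zero]
    have hne : y - x ≠ 0 := sub_ne_zero.mpr hyx
    have hint : IntegrableOn (fun z => ‖f z - f x‖) (closedBall x |y - x|) volume :=
      ((hf.integrableOn).sub (integrableOn_const measure_closedBall_lt_top.ne)).norm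
    have hsub : Set.uIoc x y ⊆ closedBall x |y - x| := by
      intro z hz
      rcases hz with ⟨h1, h2⟩
      rw [mem_closedBall, Real.dist_eq]
      rcases le_total x y with h | h
      · simp [h] at h1 h2
        rw [abs_of_nonneg (by linarith), abs_of_nonneg (by linarith)]
        linarith
      · simp [h] at h1 h2
        rw [abs_of_nonpos (by linarith), abs_of_nonpos (by linarith)]
        linarith
    have hnum : (∫ s in (0:ℝ)..y, f s) - (∫ s in (0:ℝ)..x, f s) = ∫ s in x..y, f s :=
      integral_interval_sub_left hf.intervalIntegrable hf.intervalIntegrable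
    have hslope : slope (fun τ : ℝ => ∫ s in (0:ℝ)..τ, f s) x y - f x
        = (∫ s in x..y, (f s - f x)) / (y - x) := by
      rw [slope_def_field, hnum,
        intervalIntegral.integral_sub hf.intervalIntegrable intervalIntegrable_const,
        intervalIntegral.integral_const, smul_eq_mul]
      field_simp
    rw [hslope, norm_div, Real.norm_eq_abs (y - x)]
    have h2 : ‖∫ s in x..y, (f s - f x)‖ ≤ ∫ z in closedBall x |y - x|, ‖f z - f x‖ := by
      refine (intervalIntegral.norm_integral_le_integral_norm_uIoc).trans ?_
      apply setIntegral_mono_set hint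
      · filter_upwards with z using norm_nonneg _
      · exact HasSubset.Subset.eventuallyLE hsub
    have hvol : (volume (closedBall x |y - x|)).toReal = 2 * |y - x| := by
      rw [Real.volume_closedBall]
      rw [ENNReal.toReal_ofReal (by positivity)]
    have havg : ∫ z in closedBall x |y - x|, ‖f z - f x‖
        = (2 * |y - x|) * ⨍ z in closedBall x |y - x|, ‖f z - f x‖ := by
      rw [setAverage_eq, show volume.real (closedBall x |y - x|) = 2 * |y - x| from hvol, smul_eq_mul, ← mul_assoc,
        mul_inv_cancel₀ (by positivity), one_mul]
    calc ‖∫ s in x..y, (f s - f x)‖ / |y - x|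
        ≤ ((2 * |y - x|) * ⨍ z in closedBall x |y - x|, ‖f z - f x‖) / |y - x| := by
          apply div_le_div_of_nonneg_right ?_ hr.le
          exact h2.trans_eq havg
      _ = 2 * ⨍ z in closedBall x |y - x|, ‖f z - f x‖ := by
          field_simp
  · have h3 := A.const_mul (2:ℝ)
    simpa using h3


lemma intervalIntegrable_of_bdd {f : ℝ → ℝ} {C : ℝ} (a b : ℝ)
    (hm : AEStronglyMeasurable f volume)
    (hb : ∀ x, |f x| ≤ C) : IntervalIntegrable f volume a b := by
  rw [intervalIntegrable_iff]
  exact Integrable.mono' (integrableOn_const measure_Ioc_lt_top.ne) hm.restrict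
    (Filter.Eventually.of_forall fun x => by simpa using hb x)

lemma primitive_bdd {K : ℝ → ℝ} (hKi : Integrable K) (a b : ℝ) :
    |∫ u in a..b, K u| ≤ ∫ u, |K u| := by
  rw [← Real.norm_eq_abs]
  refine intervalIntegral.norm_integral_le_integral_norm_uIoc.trans ?_
  have h1 : ∀ u, ‖K u‖ = |K u| := fun u => Real.norm_eq_abs _
  simp only [h1]
  exact setIntegral_le_integral hKi.abs
    (Filter.Eventually.of_forall fun x => abs_nonneg _)

lemma conv_fubini (T : ℝ) (K ψ : ℝ → ℝ) (hKm : Measurable K) (hKi : Integrable K)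
    (hψm : Measurable ψ) (M : ℝ) (hψb : ∀ t, |ψ t| ≤ M) (τ : ℝ) (hτ : τ ∈ Set.Icc 0 T) :
    Integrable ((Set.Ioc (0:ℝ) τ).indicator
        (fun r => ∫ v, (Set.Ioc 0 r).indicator (fun v => K (r - v) * ψ v) v)) volume ∧
    ∫ s in (0:ℝ)..τ, (∫ u in (0:ℝ)..(τ - s), K u) * ψ s
      = ∫ r in (0:ℝ)..τ, ∫ v, (Set.Ioc 0 r).indicator (fun v => K (r - v) * ψ v) v := by
  obtain ⟨hτ0, hτT⟩ := hτ
  have hM : 0 ≤ M := (abs_nonneg _).trans (hψb 0)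
  set S : Set (ℝ × ℝ) := {p : ℝ × ℝ | 0 < p.2 ∧ p.2 ≤ p.1 ∧ p.1 ≤ τ} with hSdef
  have hS : MeasurableSet S := by
    apply MeasurableSet.inter
    · exact measurableSet_lt measurable_const measurable_snd
    apply MeasurableSet.inter
    · exact measurableSet_le measurable_snd measurable_fst
    · exact measurableSet_le measurable_fst measurable_const
  set f : ℝ × ℝ → ℝ := fun p => K (p.1 - p.2) * ψ p.2 with hfdef
  have hfm : Measurable f := (hKm.comp (measurable_fst.sub measurable_snd)).mul
    (hψm.comp measurable_snd)
  set Φ : ℝ × ℝ → ℝ := S.indicator f with hΦdef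
  have hΦm : Measurable Φ := hfm.indicator hS
  -- integrability of Φ on the product
  have hWi : Integrable (fun p : ℝ × ℝ =>
      |K (p.1 - p.2)| * (Set.Ioc (0:ℝ) T).indicator (fun _ => M) p.2)
      ((volume : Measure ℝ).prod volume) := by
    have base : Integrable (fun q : ℝ × ℝ =>
        |K q.1| * (Set.Ioc (0:ℝ) T).indicator (fun _ => M) q.2)
        ((volume : Measure ℝ).prod volume) := by
      apply Integrable.mul_prod hKi.abs
      exact (integrable_indicator_iff measurableSet_Ioc).2
        (integrableOn_const measure_Ioc_lt_top.ne)
    have hmp := measurePreserving_sub_prod (volume : Measure ℝ) volume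
    exact (hmp.integrable_comp base.aestronglyMeasurable).2 base
  have hΦi : Integrable Φ ((volume : Measure ℝ).prod volume) := by
    apply Integrable.mono' hWi hΦm.aestronglyMeasurable
    apply Filter.Eventually.of_forall
    intro p
    by_cases hp : p ∈ S
    · rw [hΦdef, Set.indicator_of_mem hp]
      obtain ⟨h1, h2, h3⟩ := hp
      have hp2 : p.2 ∈ Set.Ioc (0:ℝ) T := ⟨h1, h2.trans (h3.trans hτT)⟩
      rw [Set.indicator_of_mem hp2]
      rw [Real.norm_eq_abs, hfdef, abs_mul]
      exact mul_le_mul_of_nonneg_left (hψb _) (abs_nonneg _)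
    · rw [hΦdef, Set.indicator_of_notMem hp, norm_zero]
      apply mul_nonneg (abs_nonneg _)
      exact Set.indicator_nonneg (fun _ _ => hM) _
  -- marginal in v (second coordinate)
  have hmarg : ∀ v : ℝ, (∫ r, Φ (r, v)) =
      (Set.Ioc (0:ℝ) τ).indicator (fun v => (∫ u in (0:ℝ)..(τ - v), K u) * ψ v) v := by
    intro v
    by_cases hv : v ∈ Set.Ioc (0:ℝ) τ
    · rw [Set.indicator_of_mem hv]
      obtain ⟨hv0, hvτ⟩ := hv
      have heq : ∀ r, Φ (r, v) = (Set.Icc v τ).indicator (fun r => K (r - v) * ψ v) r := by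
        intro r
        by_cases hr : r ∈ Set.Icc v τ
        · rw [Set.indicator_of_mem hr]
          have : (r, v) ∈ S := ⟨hv0, hr.1, hr.2⟩
          rw [hΦdef, Set.indicator_of_mem this]
        · rw [Set.indicator_of_notMem hr]
          have : (r, v) ∉ S := by
            intro hmem
            exact hr ⟨hmem.2.1, hmem.2.2⟩
          rw [hΦdef, Set.indicator_of_notMem this]
      simp only [heq]
      rw [MeasureTheory.integral_indicator measurableSet_Icc]
      rw [integral_Icc_eq_integral_Ioc]
      rw [← intervalIntegral.integral_of_le hvτ]
      rw [intervalIntegral.integral_mul_const]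
      congr 1
      have := intervalIntegral.integral_comp_sub_right (a := v) (b := τ)
        (fun u => K u) v
      simpa using this
    · have heq : ∀ r, Φ (r, v) = 0 := by
        intro r
        have : (r, v) ∉ S := by
          intro hmem
          rcases hmem with ⟨h1, h2, h3⟩
          exact hv ⟨h1, h2.trans h3⟩
        rw [hΦdef, Set.indicator_of_notMem this]
      simp only [heq, MeasureTheory.integral_zero]
      rw [Set.indicator_of_notMem hv]
  -- marginal in r (first coordinate)
  have hmargr : ∀ r : ℝ, (∫ v, Φ (r, v)) =
      (Set.Ioc (0:ℝ) τ).indicator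
        (fun r => ∫ v, (Set.Ioc 0 r).indicator (fun v => K (r - v) * ψ v) v) r := by
    intro r
    by_cases hr : r ∈ Set.Ioc (0:ℝ) τ
    · rw [Set.indicator_of_mem hr]
      congr 1
      funext v
      by_cases hv : v ∈ Set.Ioc (0:ℝ) r
      · have : (r, v) ∈ S := ⟨hv.1, hv.2, hr.2⟩
        rw [hΦdef, Set.indicator_of_mem this, Set.indicator_of_mem hv]
      · have : (r, v) ∉ S := by
          intro hmem
          exact hv ⟨hmem.1, hmem.2.1⟩
        rw [hΦdef, Set.indicator_of_notMem this, Set.indicator_of_notMem hv]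
    · have heq : ∀ v, Φ (r, v) = 0 := by
        intro v
        have : (r, v) ∉ S := by
          intro hmem
          rcases hmem with ⟨h1, h2, h3⟩
          exact hr ⟨h1.trans_le h2, h3⟩
        rw [hΦdef, Set.indicator_of_notMem this]
      simp only [heq, MeasureTheory.integral_zero]
      rw [Set.indicator_of_notMem hr]
  constructor
  · have hint := hΦi.integral_prod_left
    exact hint.congr (Filter.Eventually.of_forall hmargr)
  -- now assemble
  have hswap : (∫ r, ∫ v, Φ (r, v)) = ∫ v, ∫ r, Φ (r, v) := by
    exact integral_integral_swap (f := fun r v => Φ (r, v)) hΦi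
  calc ∫ s in (0:ℝ)..τ, (∫ u in (0:ℝ)..(τ - s), K u) * ψ s
      = ∫ s in Set.Ioc (0:ℝ) τ, (∫ u in (0:ℝ)..(τ - s), K u) * ψ s := by
        rw [intervalIntegral.integral_of_le hτ0]
    _ = ∫ v, (Set.Ioc (0:ℝ) τ).indicator (fun v => (∫ u in (0:ℝ)..(τ - v), K u) * ψ v) v := by
        rw [MeasureTheory.integral_indicator measurableSet_Ioc]
    _ = ∫ v, ∫ r, Φ (r, v) := by
        congr 1
        funext v
        rw [hmarg v]
    _ = ∫ r, ∫ v, Φ (r, v) := hswap.symm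
    _ = ∫ r, (Set.Ioc (0:ℝ) τ).indicator
          (fun r => ∫ v, (Set.Ioc 0 r).indicator (fun v => K (r - v) * ψ v) v) r := by
        congr 1
        funext r
        rw [hmargr r]
    _ = ∫ r in Set.Ioc (0:ℝ) τ, ∫ v, (Set.Ioc 0 r).indicator (fun v => K (r - v) * ψ v) v := by
        rw [MeasureTheory.integral_indicator measurableSet_Ioc]
    _ = ∫ r in (0:ℝ)..τ, ∫ v, (Set.Ioc 0 r).indicator (fun v => K (r - v) * ψ v) v := by
        rw [intervalIntegral.integral_of_le hτ0]


lemma conv_deriv_ae (T : ℝ) (hT : 0 < T) (k K : ℝ → ℝ)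
    (hKm : Measurable K) (hKi : Integrable K)
    (hk : ∀ t ∈ Set.Icc (0:ℝ) T, k t = k 0 + ∫ s in (0:ℝ)..t, K s)
    (ψ : ℝ → ℝ) (hψm : Measurable ψ) (M : ℝ) (hψb : ∀ t, |ψ t| ≤ M) :
    ∀ᵐ t ∂(volume.restrict (Set.Icc (0:ℝ) T)),
      ∀ D : ℝ, HasDerivAt (fun τ => ∫ s in (0:ℝ)..τ, k (τ - s) * ψ s) D t →
        D = k 0 * ψ t + ∫ s in (0:ℝ)..t, K s * ψ (t - s) := by
  have hM : 0 ≤ M := (abs_nonneg _).trans (hψb 0)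
  set g0 : ℝ → ℝ := fun r => ∫ v, (Set.Ioc 0 r).indicator (fun v => K (r - v) * ψ v) v
    with hg0def
  set ψI : ℝ → ℝ := Set.indicator (Set.Icc 0 T) ψ with hψIdef
  have hψIi : Integrable ψI := by
    rw [hψIdef]
    refine (integrable_indicator_iff measurableSet_Icc).2 ?_
    exact Integrable.mono' (integrableOn_const (C := M) measure_Icc_lt_top.ne)
      hψm.aestronglyMeasurable.restrict
      (Filter.Eventually.of_forall fun x => by simpa using hψb x)
  have hfub := conv_fubini T K ψ hKm hKi hψm M hψb
  have hGi : Integrable ((Set.Ioc (0:ℝ) T).indicator g0) volume :=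
    (hfub T ⟨hT.le, le_rfl⟩).1
  set hbar : ℝ → ℝ := fun r => k 0 * ψI r + (Set.Ioc (0:ℝ) T).indicator g0 r with hbardef
  have hbari : Integrable hbar := (hψIi.const_mul _).add hGi
  have hrep : ∀ τ ∈ Set.Icc (0:ℝ) T,
      (∫ s in (0:ℝ)..τ, k (τ - s) * ψ s) = ∫ r in (0:ℝ)..τ, hbar r := by
    intro τ hτ
    obtain ⟨hτ0, hτT⟩ := hτ
    have step1 : (∫ s in (0:ℝ)..τ, k (τ - s) * ψ s)
        = ∫ s in (0:ℝ)..τ, (k 0 * ψ s + (∫ u in (0:ℝ)..(τ - s), K u) * ψ s) := by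
      apply intervalIntegral.integral_congr
      intro s hs
      rw [Set.uIcc_of_le hτ0] at hs
      have h1 : τ - s ∈ Set.Icc (0:ℝ) T := ⟨by linarith [hs.2], by linarith [hs.1]⟩
      show k (τ - s) * ψ s = k 0 * ψ s + (∫ u in (0:ℝ)..(τ - s), K u) * ψ s
      rw [hk (τ - s) h1]
      ring
    have CK := fun a b => primitive_bdd hKi a b
    have hi1 : IntervalIntegrable (fun s => k 0 * ψ s) volume 0 τ :=
      intervalIntegrable_of_bdd (C := |k 0| * M) 0 τ
        ((hψm.const_mul _).aestronglyMeasurable)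
        (fun x => by rw [abs_mul]; exact mul_le_mul_of_nonneg_left (hψb x) (abs_nonneg _))
    have hcont : Continuous fun s : ℝ => ∫ u in (0:ℝ)..(τ - s), K u :=
      (hKi.continuous_primitive 0).comp (continuous_const.sub continuous_id)
    have hi2 : IntervalIntegrable (fun s => (∫ u in (0:ℝ)..(τ - s), K u) * ψ s) volume 0 τ :=
      intervalIntegrable_of_bdd (C := (∫ u, |K u|) * M) 0 τ
        (hcont.measurable.mul hψm).aestronglyMeasurable
        (fun x => by
          rw [abs_mul]
          exact mul_le_mul (CK 0 (τ - x)) (hψb x) (abs_nonneg _)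
            ((abs_nonneg _).trans (CK 0 (τ - x))))
    rw [step1, intervalIntegral.integral_add hi1 hi2]
    have step2 : ∫ r in (0:ℝ)..τ, hbar r
        = (∫ r in (0:ℝ)..τ, k 0 * ψI r) + ∫ r in (0:ℝ)..τ, (Set.Ioc (0:ℝ) T).indicator g0 r := by
      rw [← intervalIntegral.integral_add ((hψIi.const_mul _).intervalIntegrable)
        (hGi.intervalIntegrable)]
    rw [step2]
    congr 1
    · rw [intervalIntegral.integral_of_le hτ0, intervalIntegral.integral_of_le hτ0]
      apply setIntegral_congr_fun measurableSet_Ioc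
      intro s hs
      have hsm : s ∈ Set.Icc (0:ℝ) T := ⟨hs.1.le, hs.2.trans hτT⟩
      show k 0 * ψ s = k 0 * ψI s
      rw [hψIdef, Set.indicator_of_mem hsm]
    · rw [(hfub τ ⟨hτ0, hτT⟩).2]
      rw [intervalIntegral.integral_of_le hτ0, intervalIntegral.integral_of_le hτ0]
      apply setIntegral_congr_fun measurableSet_Ioc
      intro r hr
      have hrm : r ∈ Set.Ioc (0:ℝ) T := ⟨hr.1, hr.2.trans hτT⟩
      exact (Set.indicator_of_mem hrm g0).symm
  have hbd : ∀ᵐ t ∂(volume : Measure ℝ), t ∉ ({0, T} : Set ℝ) :=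
    compl_mem_ae_iff.mpr ((Set.toFinite _).measure_zero volume)
  filter_upwards [ae_restrict_mem measurableSet_Icc,
    ae_restrict_of_ae (ae_hasDerivAt_primitive hbari),
    ae_restrict_of_ae hbd] with t htI hprim hbt D hD
  have ht0 : t ≠ 0 := fun h => hbt (by simp [h])
  have htT : t ≠ T := fun h => hbt (by simp [h])
  have htO : t ∈ Set.Ioo (0:ℝ) T :=
    Set.mem_Ioo.mpr ⟨lt_of_le_of_ne htI.1 (Ne.symm ht0), lt_of_le_of_ne htI.2 htT⟩
  have hEq : (fun τ => ∫ s in (0:ℝ)..τ, k (τ - s) * ψ s)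
      =ᶠ[𝓝 t] fun τ => ∫ r in (0:ℝ)..τ, hbar r := by
    filter_upwards [isOpen_Ioo.mem_nhds htO] with τ hτ
    exact hrep τ (Set.Ioo_subset_Icc_self hτ)
  have hD' : HasDerivAt (fun τ => ∫ r in (0:ℝ)..τ, hbar r) D t :=
    (Filter.EventuallyEq.hasDerivAt_iff hEq).1 hD
  have hDe : D = hbar t := hD'.unique hprim
  rw [hDe]
  have h1 : ψI t = ψ t := by rw [hψIdef]; exact Set.indicator_of_mem htI _
  have h2 : (Set.Ioc (0:ℝ) T).indicator g0 t = g0 t :=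
    Set.indicator_of_mem (Set.mem_Ioc.mpr ⟨htO.1, htI.2⟩) _
  have h3 : g0 t = ∫ s in (0:ℝ)..t, K s * ψ (t - s) := by
    show (∫ v, (Set.Ioc (0:ℝ) t).indicator (fun v => K (t - v) * ψ v) v) = _
    rw [MeasureTheory.integral_indicator measurableSet_Ioc]
    rw [← intervalIntegral.integral_of_le htI.1]
    have hsub := intervalIntegral.integral_comp_sub_left (a := 0) (b := t)
      (fun s => K s * ψ (t - s)) t
    simp only [sub_sub_cancel, sub_zero, sub_self] at hsub
    exact hsub
  show k 0 * ψI t + (Set.Ioc (0:ℝ) T).indicator g0 t = _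
  rw [h1, h2, h3]

end ConvChainAux

section ConvChainAux
open Set Metric Filter Topology
/-- Convolution identity for `C¹` convex `H`, `k ∈ W^{1,1}(0,T)` and bounded measurable `φ`:
for a.e. `t ∈ [0,T]`,
`H'(φ(t)) · d/dt (k*φ)(t) = d/dt (k*(H∘φ))(t) + k(t)(−H(φ(t)) + H'(φ(t))φ(t))
  − ∫₀ᵗ k'(s)[H(φ(t−s)) − H(φ(t)) − H'(φ(t))(φ(t−s) − φ(t))] ds`. -/
theorem convolution_chain_rule_identity
    (T : ℝ) (hT : 0 < T)
    (k k' : ℝ → ℝ)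
    -- `k ∈ W^{1,1}(0,T)`: absolutely continuous with integrable derivative `k'`
    (hk' : IntegrableOn k' (Set.Icc 0 T))
    (hk : ∀ t ∈ Set.Icc (0:ℝ) T, k t = k 0 + ∫ s in (0:ℝ)..t, k' s)
    (H : ℝ → ℝ) (hH : ContDiff ℝ 1 H) (hHconv : ConvexOn ℝ Set.univ H)
    (φ : ℝ → ℝ) (hφm : Measurable φ) (M : ℝ) (hφb : ∀ t, |φ t| ≤ M)
    -- `D₁` is the a.e. derivative of `k*φ`, `D₂` that of `k*(H∘φ)`
    (D₁ D₂ : ℝ → ℝ)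
    (hD₁ : ∀ᵐ t ∂(volume.restrict (Set.Icc (0:ℝ) T)),
      HasDerivAt (fun τ => ∫ s in (0:ℝ)..τ, k (τ - s) * φ s) (D₁ t) t)
    (hD₂ : ∀ᵐ t ∂(volume.restrict (Set.Icc (0:ℝ) T)),
      HasDerivAt (fun τ => ∫ s in (0:ℝ)..τ, k (τ - s) * H (φ s)) (D₂ t) t) :
    ∀ᵐ t ∂(volume.restrict (Set.Icc (0:ℝ) T)),
      deriv H (φ t) * D₁ t =
        D₂ t + k t * (-(H (φ t)) + deriv H (φ t) * φ t)
          - ∫ s in (0:ℝ)..t,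
              k' s * (H (φ (t - s)) - H (φ t) - deriv H (φ t) * (φ (t - s) - φ t)) := by
  -- measurable representative of k'
  have hsm := hk'.aestronglyMeasurable
  set g : ℝ → ℝ := hsm.mk k' with hgdef
  have hgm : Measurable g := hsm.stronglyMeasurable_mk.measurable
  have hgae : k' =ᵐ[volume.restrict (Set.Icc (0:ℝ) T)] g := hsm.ae_eq_mk
  set K : ℝ → ℝ := Set.indicator (Set.Icc (0:ℝ) T) g with hKdef
  have hKm : Measurable K := hgm.indicator measurableSet_Icc
  have hKaeIcc : k' =ᵐ[volume.restrict (Set.Icc (0:ℝ) T)] K := by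
    filter_upwards [hgae, ae_restrict_mem measurableSet_Icc] with x hx hmem
    rw [hKdef, Set.indicator_of_mem hmem]
    exact hx
  have hKi : Integrable K := by
    rw [hKdef, integrable_indicator_iff measurableSet_Icc]
    exact hk'.congr hgae
  have hKae : ∀ t ∈ Set.Icc (0:ℝ) T, k' =ᵐ[volume.restrict (Set.Ioc (0:ℝ) t)] K := by
    intro t ht
    exact ae_restrict_of_ae_restrict_of_subset (Set.Ioc_subset_Icc_self.trans
      (Set.Icc_subset_Icc_right ht.2)) hKaeIcc
  have hkK : ∀ t ∈ Set.Icc (0:ℝ) T, k t = k 0 + ∫ s in (0:ℝ)..t, K s := by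
    intro t ht
    rw [hk t ht]
    congr 1
    rw [intervalIntegral.integral_of_le ht.1, intervalIntegral.integral_of_le ht.1]
    exact MeasureTheory.integral_congr_ae (hKae t ht)
  -- boundedness of H ∘ φ
  have hφmem : ∀ t, φ t ∈ Set.Icc (-M) M := fun t => by
    have := abs_le.1 (hφb t); exact ⟨this.1, this.2⟩
  obtain ⟨C, hC⟩ : ∃ C, ∀ y ∈ Set.Icc (-M) M, ‖H y‖ ≤ C :=
    isCompact_Icc.exists_bound_of_continuousOn hH.continuous.continuousOn
  have hHφm : Measurable fun s => H (φ s) := hH.continuous.measurable.comp hφm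
  have hHφb : ∀ s, |H (φ s)| ≤ C := fun s => hC _ (hφmem s)
  have A1 := conv_deriv_ae T hT k K hKm hKi hkK φ hφm M hφb
  have A2 := conv_deriv_ae T hT k K hKm hKi hkK (fun s => H (φ s)) hHφm C hHφb
  filter_upwards [A1, A2, hD₁, hD₂, ae_restrict_mem measurableSet_Icc]
    with t h1 h2 hd1 hd2 htI
  have e1 : D₁ t = k 0 * φ t + ∫ s in (0:ℝ)..t, K s * φ (t - s) := h1 _ hd1
  have e2 : D₂ t = k 0 * H (φ t) + ∫ s in (0:ℝ)..t, K s * H (φ (t - s)) := h2 _ hd2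
  -- integrabilities
  have jK : IntervalIntegrable K volume 0 t := hKi.intervalIntegrable
  have j1 : IntervalIntegrable (fun s => φ (t - s) * K s) volume 0 t :=
    (hKi.bdd_mul ((hφm.comp (measurable_const.sub measurable_id)).aestronglyMeasurable)
      (Filter.Eventually.of_forall fun x => by simpa using hφb (t - x))).intervalIntegrable
  have j2 : IntervalIntegrable (fun s => H (φ (t - s)) * K s) volume 0 t :=
    (hKi.bdd_mul (((hH.continuous.measurable.comp hφm).comp
        (measurable_const.sub measurable_id)).aestronglyMeasurable)
      (Filter.Eventually.of_forall fun x => by simpa using hHφb (t - x))).intervalIntegrable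
  -- convert the goal's k'-integral to K and split it
  have hfin : (∫ s in (0:ℝ)..t,
        k' s * (H (φ (t - s)) - H (φ t) - deriv H (φ t) * (φ (t - s) - φ t)))
      = (∫ s in (0:ℝ)..t, H (φ (t - s)) * K s)
        - deriv H (φ t) * (∫ s in (0:ℝ)..t, φ (t - s) * K s)
        - (H (φ t) - deriv H (φ t) * φ t) * (∫ s in (0:ℝ)..t, K s) := by
    have conv1 : (∫ s in (0:ℝ)..t,
          k' s * (H (φ (t - s)) - H (φ t) - deriv H (φ t) * (φ (t - s) - φ t)))
        = ∫ s in (0:ℝ)..t,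
            (H (φ (t - s)) * K s - deriv H (φ t) * (φ (t - s) * K s)
              - (H (φ t) - deriv H (φ t) * φ t) * K s) := by
      rw [intervalIntegral.integral_of_le htI.1, intervalIntegral.integral_of_le htI.1]
      apply MeasureTheory.integral_congr_ae
      filter_upwards [hKae t htI] with x hx
      rw [hx]
      ring
    rw [conv1]
    rw [intervalIntegral.integral_sub (j2.sub (j1.const_mul _)) (jK.const_mul _),
      intervalIntegral.integral_sub j2 (j1.const_mul _),
      intervalIntegral.integral_const_mul, intervalIntegral.integral_const_mul]
  -- flip products in e1, e2
  have f1 : (∫ s in (0:ℝ)..t, K s * φ (t - s)) = ∫ s in (0:ℝ)..t, φ (t - s) * K s :=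
    intervalIntegral.integral_congr fun s _ => mul_comm _ _
  have f2 : (∫ s in (0:ℝ)..t, K s * H (φ (t - s))) = ∫ s in (0:ℝ)..t, H (φ (t - s)) * K s :=
    intervalIntegral.integral_congr fun s _ => mul_comm _ _
  rw [hfin, e1, e2, f1, f2, hkK t htI]
  ring

end ConvChainAux
end

section
/- Let k ∈ W^{1,1}(0,T) be nonnegative and nonincreasing, H : ℝ → ℝ be C¹ and convex, and φ : [0,T] → ℝ be bounded measurable. Then for almost all t ∈ [0,T], H'(φ(t)) · d/dt(k*φ)(t) ≥ d/dt (k*(H∘φ))(t) + k(t)(−H(φ(t)) + H'(φ(t))φ(t)). -/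
open MeasureTheory intervalIntegral Filter Set Metric Topology

private lemma bdd_integrableOn {f : ℝ → ℝ} (hf : Measurable f) {C : ℝ}
    (hfb : ∀ s, |f s| ≤ C) {s : Set ℝ} (hs : MeasurableSet s) (hμ : volume s < ⊤) :
    IntegrableOn f s volume := by
  have hconst : IntegrableOn (fun _ => C) s volume := integrableOn_const hμ.ne
  refine hconst.mono' hf.aestronglyMeasurable.restrict ?_
  exact ae_of_all _ fun x => by simpa [Real.norm_eq_abs] using hfb x

private lemma bdd_locallyIntegrable {f : ℝ → ℝ} (hf : Measurable f) {C : ℝ}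
    (hfb : ∀ s, |f s| ≤ C) : LocallyIntegrable f volume := by
  rw [locallyIntegrable_iff]
  intro K hK
  exact bdd_integrableOn hf hfb hK.measurableSet hK.measure_lt_top

private lemma right_lebesgue_points {f : ℝ → ℝ} (hf : Measurable f) {C : ℝ}
    (hfb : ∀ s, |f s| ≤ C) :
    ∀ᵐ t ∂(volume : Measure ℝ),
      Tendsto (fun y => (y - t)⁻¹ * ∫ s in Set.Ioc t y, |f s - f t|) (𝓝[>] t) (𝓝 0) := by
  have hloc : LocallyIntegrable f volume := bdd_locallyIntegrable hf hfb
  filter_upwards [(Besicovitch.vitaliFamily (volume : Measure ℝ)).ae_tendsto_average_norm_sub hloc]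
    with t ht
  have h1 : Tendsto (fun y : ℝ => y - t) (𝓝[>] t) (𝓝[>] (0:ℝ)) := by
    apply tendsto_nhdsWithin_of_tendsto_nhds_of_eventually_within
    · have : Tendsto (fun y : ℝ => y - t) (𝓝 t) (𝓝 (t - t)) :=
        (continuous_id.sub continuous_const).tendsto t
      simpa using this.mono_left nhdsWithin_le_nhds
    · filter_upwards [self_mem_nhdsWithin] with y (hy : t < y)
      simpa [Set.mem_Ioi] using sub_pos.2 hy
  have h3 : Tendsto (fun y => ⨍ s in closedBall t (y - t), ‖f s - f t‖ ∂volume)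
      (𝓝[>] t) (𝓝 0) :=
    (ht.comp (Besicovitch.tendsto_filterAt volume t)).comp h1
  have h4 : Tendsto (fun y => 2 * ⨍ s in closedBall t (y - t), ‖f s - f t‖) (𝓝[>] t) (𝓝 0) := by
    simpa using h3.const_mul 2
  apply squeeze_zero' _ _ h4
  · filter_upwards [self_mem_nhdsWithin] with y (hy : t < y)
    have h0 : 0 ≤ ∫ s in Set.Ioc t y, |f s - f t| :=
      setIntegral_nonneg measurableSet_Ioc fun s _ => abs_nonneg _
    have h0' : (0:ℝ) ≤ (y - t)⁻¹ := inv_nonneg.2 (by linarith)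
    exact mul_nonneg h0' h0
  · filter_upwards [self_mem_nhdsWithin] with y (hy : t < y)
    have hr : 0 < y - t := sub_pos.2 hy
    have hsub : Set.Ioc t y ⊆ closedBall t (y - t) := by
      intro s hs
      rw [Real.closedBall_eq_Icc]
      exact ⟨by linarith [hs.1.le], by linarith [hs.2]⟩
    have habs : Measurable fun s => |f s - f t| := (hf.sub measurable_const).abs
    have hbnd : ∀ s, |(|f s - f t|)| ≤ C + |f t| := by
      intro s
      rw [abs_abs]
      calc |f s - f t| ≤ |f s| + |f t| := abs_sub _ _
        _ ≤ C + |f t| := by linarith [hfb s]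
    have hint : IntegrableOn (fun s => |f s - f t|) (closedBall t (y - t)) volume :=
      bdd_integrableOn habs hbnd measurableSet_closedBall measure_closedBall_lt_top
    have hmono : (∫ s in Set.Ioc t y, |f s - f t|) ≤ ∫ s in closedBall t (y - t), |f s - f t| :=
      setIntegral_mono_set hint (ae_of_all _ fun s => abs_nonneg _)
        (HasSubset.Subset.eventuallyLE hsub)
    have havg : (⨍ s in closedBall t (y - t), ‖f s - f t‖) =
        (2 * (y - t))⁻¹ * ∫ s in closedBall t (y - t), |f s - f t| := by
      rw [setAverage_eq, Real.volume_real_closedBall (by linarith),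
        smul_eq_mul]
      simp [Real.norm_eq_abs]
    rw [havg]
    have heq : 2 * ((2 * (y - t))⁻¹ * ∫ s in closedBall t (y - t), |f s - f t|) =
        (y - t)⁻¹ * ∫ s in closedBall t (y - t), |f s - f t| := by
      field_simp
    rw [heq]
    exact mul_le_mul_of_nonneg_left hmono (inv_nonneg.2 hr.le)

/-- For `k ∈ W^{1,1}(0,T)` nonnegative and nonincreasing, `H` convex and `C¹`, and `φ` bounded
measurable, for a.e. `t ∈ [0,T]`:
`H'(φ(t)) · d/dt(k*φ)(t) ≥ d/dt (k*(H∘φ))(t) + k(t)(−H(φ(t)) + H'(φ(t))φ(t))`. -/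
theorem convolution_chain_rule_inequality
    (T : ℝ) (hT : 0 < T)
    (k k' : ℝ → ℝ)
    (hk' : IntegrableOn k' (Set.Icc 0 T))
    (hk : ∀ t ∈ Set.Icc (0:ℝ) T, k t = k 0 + ∫ s in (0:ℝ)..t, k' s)
    (hknonneg : ∀ t ∈ Set.Icc (0:ℝ) T, 0 ≤ k t)
    (hkmono : ∀ s ∈ Set.Icc (0:ℝ) T, ∀ t ∈ Set.Icc (0:ℝ) T, s ≤ t → k t ≤ k s)
    (H : ℝ → ℝ) (hH : ContDiff ℝ 1 H) (hHconv : ConvexOn ℝ Set.univ H)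
    (φ : ℝ → ℝ) (hφm : Measurable φ) (M : ℝ) (hφb : ∀ t, |φ t| ≤ M)
    (D₁ D₂ : ℝ → ℝ)
    (hD₁ : ∀ᵐ t ∂(volume.restrict (Set.Icc (0:ℝ) T)),
      HasDerivAt (fun τ => ∫ s in (0:ℝ)..τ, k (τ - s) * φ s) (D₁ t) t)
    (hD₂ : ∀ᵐ t ∂(volume.restrict (Set.Icc (0:ℝ) T)),
      HasDerivAt (fun τ => ∫ s in (0:ℝ)..τ, k (τ - s) * H (φ s)) (D₂ t) t) :
    ∀ᵐ t ∂(volume.restrict (Set.Icc (0:ℝ) T)),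
      deriv H (φ t) * D₁ t ≥
        D₂ t + k t * (-(H (φ t)) + deriv H (φ t) * φ t) := by
  classical
  have hM0 : 0 ≤ M := (abs_nonneg _).trans (hφb 0)
  have h0T : (0:ℝ) ∈ Set.Icc (0:ℝ) T := ⟨le_rfl, hT.le⟩
  have hkub : ∀ u ∈ Set.Icc (0:ℝ) T, k u ≤ k 0 := fun u hu => hkmono 0 h0T u hu hu.1
  set g : ℝ → ℝ := fun τ => k 0 + ∫ s in (0:ℝ)..τ, k' s with hg_def
  have hgk : Set.EqOn k g (Set.Icc 0 T) := fun τ hτ => hk τ hτ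
  have hgcont : ContinuousOn g (Set.Icc 0 T) := by
    apply continuousOn_const.add
    have h := intervalIntegral.continuousOn_primitive_interval
      (a := 0) (b := T) (f := k') (μ := volume) (by simpa [Set.uIcc_of_le hT.le] using hk')
    simpa [Set.uIcc_of_le hT.le] using h
  obtain ⟨B, hB⟩ := (isCompact_Icc (a := -M) (b := M)).exists_bound_of_continuousOn
    hH.continuous.continuousOn
  have hHφb : ∀ s, |H (φ s)| ≤ B := fun s => by
    simpa [Real.norm_eq_abs] using hB (φ s) (abs_le.mp (hφb s))
  have hHφm : Measurable fun s => H (φ s) := hH.continuous.measurable.comp hφm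
  -- integrability helper
  have hint : ∀ (w : ℝ → ℝ), Measurable w → ∀ C : ℝ, (∀ s, |w s| ≤ C) →
      ∀ τ ∈ Set.Icc (0:ℝ) T, IntegrableOn (fun s => k (τ - s) * w s) (Set.Ioc 0 τ) volume := by
    intro w hw C hC τ hτ
    have hmeas : AEStronglyMeasurable (fun s => k (τ - s) * w s)
        (volume.restrict (Set.Ioc 0 τ)) := by
      have hg' : ContinuousOn (fun s => g (τ - s)) (Set.Icc 0 τ) := by
        apply hgcont.comp (continuous_const.sub continuous_id).continuousOn
        intro s hs
        simp only [Set.mem_Icc] at hs ⊢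
        constructor <;> [skip; skip] <;> simp only [Pi.sub_apply, id] <;> [linarith [hs.2]; linarith [hs.1, hτ.2]]
      have hgsm : AEStronglyMeasurable (fun s => g (τ - s) * w s)
          (volume.restrict (Set.Ioc 0 τ)) :=
        ((hg'.mono Set.Ioc_subset_Icc_self).aestronglyMeasurable measurableSet_Ioc).mul
          hw.aestronglyMeasurable.restrict
      apply hgsm.congr
      filter_upwards [ae_restrict_mem measurableSet_Ioc] with s hs
      have hmem : τ - s ∈ Set.Icc (0:ℝ) T := ⟨by linarith [hs.2], by linarith [hs.1, hτ.2]⟩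
      rw [hgk hmem]
    have hconst : IntegrableOn (fun _ => k 0 * C) (Set.Ioc 0 τ) volume :=
      integrableOn_const measure_Ioc_lt_top.ne
    refine hconst.mono' hmeas ?_
    filter_upwards [ae_restrict_mem measurableSet_Ioc] with s hs
    have hmem : τ - s ∈ Set.Icc (0:ℝ) T := ⟨by linarith [hs.2], by linarith [hs.1, hτ.2]⟩
    rw [Real.norm_eq_abs, abs_mul, abs_of_nonneg (hknonneg _ hmem)]
    exact mul_le_mul (hkub _ hmem) (hC s) (abs_nonneg _) (hknonneg 0 h0T)
  -- a.e. facts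
  have hae0 : ∀ᵐ t ∂(volume.restrict (Set.Icc (0:ℝ) T)), t ∈ Set.Ioo 0 T := by
    have h1 : ∀ᵐ t ∂(volume : Measure ℝ), t ∉ ({0, T} : Set ℝ) :=
      measure_eq_zero_iff_ae_notMem.1 ((Set.to_countable ({0, T} : Set ℝ)).measure_zero _)
    filter_upwards [ae_restrict_mem measurableSet_Icc, ae_restrict_of_ae h1] with t ht ht'
    simp only [Set.mem_insert_iff, Set.mem_singleton_iff, not_or] at ht'
    exact ⟨lt_of_le_of_ne ht.1 (Ne.symm ht'.1), lt_of_le_of_ne ht.2 ht'.2⟩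
  have hlebφ := right_lebesgue_points hφm hφb
  have hlebH := right_lebesgue_points hHφm hHφb
  filter_upwards [hD₁, hD₂, hae0, ae_restrict_of_ae hlebφ, ae_restrict_of_ae hlebH]
    with t hd1 hd2 htI hlφ hlH
  have htT : t ∈ Set.Icc (0:ℝ) T := ⟨htI.1.le, htI.2.le⟩
  set a := φ t with ha_def
  set da := deriv H a with hda_def
  set ψ : ℝ → ℝ := fun s => H (φ s) - H a - da * (φ s - a) with hψ_def
  have hHd : DifferentiableAt ℝ H a := (hH.differentiable one_ne_zero).differentiableAt
  have hψ0 : ∀ s, 0 ≤ ψ s := by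
    intro s
    rcases lt_trichotomy (φ s) a with h | h | h
    · have hs := hHconv.slope_le_deriv (Set.mem_univ (φ s)) (Set.mem_univ a) h hHd
      rw [slope_def_field] at hs
      have hpos : 0 < a - φ s := by linarith
      have := (div_le_iff₀ hpos).1 hs
      simp only [hψ_def]; nlinarith
    · simp [hψ_def, h]
    · have hs := hHconv.deriv_le_slope (Set.mem_univ a) (Set.mem_univ (φ s)) h hHd
      rw [slope_def_field] at hs
      have hpos : 0 < φ s - a := by linarith
      have := (le_div_iff₀ hpos).1 hs
      simp only [hψ_def]; nlinarith
  have hψm : Measurable ψ :=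
    (hHφm.sub measurable_const).sub ((hφm.sub measurable_const).const_mul da)
  set Cψ : ℝ := B + |H a| + |da| * (M + |a|) with hCψ_def
  have hψb : ∀ s, |ψ s| ≤ Cψ := by
    intro s
    have h1 : |H (φ s) - H a| ≤ B + |H a| := (abs_sub _ _).trans (by linarith [hHφb s])
    have h2 : |φ s - a| ≤ M + |a| := (abs_sub _ _).trans (by linarith [hφb s])
    calc |ψ s| ≤ |H (φ s) - H a| + |da * (φ s - a)| := abs_sub _ _
      _ = |H (φ s) - H a| + |da| * |φ s - a| := by rw [abs_mul]
      _ ≤ Cψ := by rw [hCψ_def]; nlinarith [abs_nonneg da]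
  set F : ℝ → ℝ := fun τ => ∫ s in (0:ℝ)..τ, k (τ - s) * ψ s with hF_def
  set L : ℝ := D₂ t - da * D₁ t + (da * a - H a) * k t with hL_def
  -- derivative of the primitive of k
  have hkIoc : IntegrableOn k (Set.Ioc 0 t) volume := by
    have hgi : IntegrableOn g (Set.Ioc 0 t) volume :=
      (((hgcont.mono (Set.Icc_subset_Icc le_rfl htI.2.le)).integrableOn_Icc).mono_set
        Set.Ioc_subset_Icc_self)
    exact hgi.congr_fun (fun x hx => (hgk ⟨hx.1.le, hx.2.trans htI.2.le⟩).symm) measurableSet_Ioc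
  have hK : HasDerivAt (fun τ => ∫ u in (0:ℝ)..τ, k u) (k t) t := by
    apply intervalIntegral.integral_hasDerivAt_right
    · exact (intervalIntegrable_iff_integrableOn_Ioc_of_le htI.1.le).2 hkIoc
    · refine ⟨Set.Icc 0 T, Icc_mem_nhds htI.1 htI.2, ?_⟩
      exact ((hgcont.aestronglyMeasurable measurableSet_Icc).congr
        ((ae_restrict_mem measurableSet_Icc).mono fun x hx => (hgk hx).symm))
    · have hgat : ContinuousAt g t := hgcont.continuousAt (Icc_mem_nhds htI.1 htI.2)
      exact hgat.congr (Filter.eventuallyEq_of_mem (Icc_mem_nhds htI.1 htI.2) hgk).symm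
  -- the splitting identity
  have hFeq : ∀ τ ∈ Set.Icc (0:ℝ) T,
      F τ = (∫ s in (0:ℝ)..τ, k (τ - s) * H (φ s))
        - da * (∫ s in (0:ℝ)..τ, k (τ - s) * φ s)
        + (da * a - H a) * ∫ u in (0:ℝ)..τ, k u := by
    intro τ hτ
    have i1 : IntervalIntegrable (fun s => k (τ - s) * H (φ s)) volume 0 τ :=
      (intervalIntegrable_iff_integrableOn_Ioc_of_le hτ.1).2 (hint _ hHφm B hHφb τ hτ)
    have i2 : IntervalIntegrable (fun s => k (τ - s) * φ s) volume 0 τ :=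
      (intervalIntegrable_iff_integrableOn_Ioc_of_le hτ.1).2 (hint _ hφm M hφb τ hτ)
    have i3 : IntervalIntegrable (fun s => k (τ - s) * 1) volume 0 τ :=
      (intervalIntegrable_iff_integrableOn_Ioc_of_le hτ.1).2
        (hint _ measurable_const 1 (by simp) τ hτ)
    have e3 : (∫ s in (0:ℝ)..τ, k (τ - s) * 1) = ∫ u in (0:ℝ)..τ, k u := by
      simp only [mul_one]
      simpa using intervalIntegral.integral_comp_sub_left (a := (0:ℝ)) (b := τ) k τ
    rw [← e3]
    have hptw : ∀ s, k (τ - s) * ψ s = (k (τ - s) * H (φ s) - da * (k (τ - s) * φ s))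
        + (da * a - H a) * (k (τ - s) * 1) := by
      intro s; simp only [hψ_def]; ring
    calc F τ = ∫ s in (0:ℝ)..τ, ((k (τ - s) * H (φ s) - da * (k (τ - s) * φ s))
        + (da * a - H a) * (k (τ - s) * 1)) := by
          rw [hF_def]; exact intervalIntegral.integral_congr fun s _ => hptw s
      _ = (∫ s in (0:ℝ)..τ, k (τ - s) * H (φ s)) - da * (∫ s in (0:ℝ)..τ, k (τ - s) * φ s)
        + (da * a - H a) * ∫ s in (0:ℝ)..τ, k (τ - s) * 1 := by
          rw [intervalIntegral.integral_add (i1.sub (i2.const_mul da)) (i3.const_mul _),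
            intervalIntegral.integral_sub i1 (i2.const_mul da),
            intervalIntegral.integral_const_mul, intervalIntegral.integral_const_mul]
  have hF' : HasDerivAt F L t := by
    have hcombo : HasDerivAt (fun τ => (∫ s in (0:ℝ)..τ, k (τ - s) * H (φ s))
        - da * (∫ s in (0:ℝ)..τ, k (τ - s) * φ s)
        + (da * a - H a) * ∫ u in (0:ℝ)..τ, k u) L t := by
      have h := (hd2.sub (hd1.const_mul da)).add (hK.const_mul (da * a - H a))
      exact h
    apply hcombo.congr_of_eventuallyEq
    filter_upwards [Icc_mem_nhds htI.1 htI.2] with τ hτ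
    exact hFeq τ hτ
  -- the key upper bound on forward increments
  have hupper : ∀ y ∈ Set.Ioc t T, F y - F t ≤ k 0 * ∫ s in Set.Ioc t y, ψ s := by
    intro y hy
    have hyI : y ∈ Set.Icc (0:ℝ) T := ⟨(htI.1.trans hy.1).le, hy.2⟩
    have iy : IntegrableOn (fun s => k (y - s) * ψ s) (Set.Ioc 0 y) volume :=
      hint _ hψm Cψ hψb y hyI
    have iy1 : IntegrableOn (fun s => k (y - s) * ψ s) (Set.Ioc 0 t) volume :=
      iy.mono_set (Set.Ioc_subset_Ioc le_rfl hy.1.le)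
    have iy2 : IntegrableOn (fun s => k (y - s) * ψ s) (Set.Ioc t y) volume :=
      iy.mono_set (Set.Ioc_subset_Ioc htI.1.le le_rfl)
    have it : IntegrableOn (fun s => k (t - s) * ψ s) (Set.Ioc 0 t) volume :=
      hint _ hψm Cψ hψb t htT
    have hψint : IntegrableOn ψ (Set.Ioc t y) volume :=
      bdd_integrableOn hψm hψb measurableSet_Ioc measure_Ioc_lt_top
    have hsplit : F y = (∫ s in (0:ℝ)..t, k (y - s) * ψ s) + ∫ s in t..y, k (y - s) * ψ s :=
      (intervalIntegral.integral_add_adjacent_intervals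
        ((intervalIntegrable_iff_integrableOn_Ioc_of_le htI.1.le).2 iy1)
        ((intervalIntegrable_iff_integrableOn_Ioc_of_le hy.1.le).2 iy2)).symm
    have h1 : (∫ s in (0:ℝ)..t, k (y - s) * ψ s) ≤ F t := by
      have hFt : F t = ∫ s in Set.Ioc 0 t, k (t - s) * ψ s :=
        intervalIntegral.integral_of_le htI.1.le
      rw [intervalIntegral.integral_of_le htI.1.le, hFt]
      apply setIntegral_mono_on iy1 it measurableSet_Ioc
      intro s hs
      have h1m : t - s ∈ Set.Icc (0:ℝ) T := ⟨by linarith [hs.2], by linarith [hs.1, htI.2.le]⟩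
      have h2m : y - s ∈ Set.Icc (0:ℝ) T := ⟨by linarith [hs.2, hy.1.le], by linarith [hs.1, hy.2]⟩
      exact mul_le_mul_of_nonneg_right (hkmono _ h1m _ h2m (by linarith [hy.1.le])) (hψ0 s)
    have h2 : (∫ s in t..y, k (y - s) * ψ s) ≤ k 0 * ∫ s in Set.Ioc t y, ψ s := by
      rw [intervalIntegral.integral_of_le hy.1.le,
        ← MeasureTheory.integral_const_mul]
      apply setIntegral_mono_on iy2 (hψint.const_mul _) measurableSet_Ioc
      intro s hs
      have h2m : y - s ∈ Set.Icc (0:ℝ) T :=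
        ⟨by linarith [hs.2], by linarith [hs.1, hy.2, htI.1]⟩
      exact mul_le_mul_of_nonneg_right (hkub _ h2m) (hψ0 s)
    rw [hsplit]; linarith
  -- slope convergence
  have hslope : Tendsto (fun y => (F y - F t) / (y - t)) (𝓝[>] t) (𝓝 L) := by
    have h := (hasDerivAt_iff_tendsto_slope.1 hF').mono_left
      (nhdsWithin_mono t fun y hy => (ne_of_gt hy : y ≠ t))
    apply h.congr
    intro y
    rw [slope_def_field]
  -- error term tends to zero
  have hcore : Tendsto (fun y => (y - t)⁻¹ * ∫ s in Set.Ioc t y, ψ s) (𝓝[>] t) (𝓝 0) := by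
    have hsum : Tendsto (fun y => (y - t)⁻¹ * (∫ s in Set.Ioc t y, |H (φ s) - H a|)
        + |da| * ((y - t)⁻¹ * ∫ s in Set.Ioc t y, |φ s - a|)) (𝓝[>] t) (𝓝 0) := by
      have h := hlH.add (hlφ.const_mul |da|)
      simpa using h
    apply squeeze_zero' _ _ hsum
    · filter_upwards [self_mem_nhdsWithin] with y (hy : t < y)
      exact mul_nonneg (inv_nonneg.2 (by linarith))
        (setIntegral_nonneg measurableSet_Ioc fun s _ => hψ0 s)
    · filter_upwards [self_mem_nhdsWithin] with y (hy : t < y)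
      have hintH : IntegrableOn (fun s => |H (φ s) - H a|) (Set.Ioc t y) volume :=
        bdd_integrableOn (hHφm.sub measurable_const).abs (C := B + |H a|)
          (fun s => by rw [abs_abs]; exact (abs_sub _ _).trans (by linarith [hHφb s]))
          measurableSet_Ioc measure_Ioc_lt_top
      have hintφ : IntegrableOn (fun s => |φ s - a|) (Set.Ioc t y) volume :=
        bdd_integrableOn (hφm.sub measurable_const).abs (C := M + |a|)
          (fun s => by rw [abs_abs]; exact (abs_sub _ _).trans (by linarith [hφb s]))
          measurableSet_Ioc measure_Ioc_lt_top
      have hψint2 : IntegrableOn ψ (Set.Ioc t y) volume :=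
        bdd_integrableOn hψm hψb measurableSet_Ioc measure_Ioc_lt_top
      have hle : (∫ s in Set.Ioc t y, ψ s)
          ≤ ∫ s in Set.Ioc t y, (|H (φ s) - H a| + |da| * |φ s - a|) := by
        apply setIntegral_mono_on hψint2 (hintH.add (hintφ.const_mul _)) measurableSet_Ioc
        intro s _
        calc ψ s ≤ |ψ s| := le_abs_self _
          _ ≤ |H (φ s) - H a| + |da * (φ s - a)| := abs_sub _ _
          _ = |H (φ s) - H a| + |da| * |φ s - a| := by rw [abs_mul]
      have hinv : (0:ℝ) ≤ (y - t)⁻¹ := inv_nonneg.2 (by linarith)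
      calc (y - t)⁻¹ * ∫ s in Set.Ioc t y, ψ s
          ≤ (y - t)⁻¹ * ∫ s in Set.Ioc t y, (|H (φ s) - H a| + |da| * |φ s - a|) :=
            mul_le_mul_of_nonneg_left hle hinv
        _ = (y - t)⁻¹ * (∫ s in Set.Ioc t y, |H (φ s) - H a|)
            + |da| * ((y - t)⁻¹ * ∫ s in Set.Ioc t y, |φ s - a|) := by
            rw [integral_add hintH (hintφ.const_mul _), MeasureTheory.integral_const_mul]; ring
  have hE : Tendsto (fun y => k 0 * ((y - t)⁻¹ * ∫ s in Set.Ioc t y, ψ s)) (𝓝[>] t) (𝓝 0) := by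
    simpa using hcore.const_mul (k 0)
  have hev : ∀ᶠ y in 𝓝[>] t,
      (F y - F t) / (y - t) ≤ k 0 * ((y - t)⁻¹ * ∫ s in Set.Ioc t y, ψ s) := by
    filter_upwards [self_mem_nhdsWithin, nhdsWithin_le_nhds (Iio_mem_nhds htI.2)]
      with y (hy : t < y) (hyT : y < T)
    have h := hupper y ⟨hy, hyT.le⟩
    have hpos : 0 < y - t := by linarith
    rw [div_le_iff₀ hpos]
    calc F y - F t ≤ k 0 * ∫ s in Set.Ioc t y, ψ s := h
      _ = k 0 * ((y - t)⁻¹ * ∫ s in Set.Ioc t y, ψ s) * (y - t) := by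
          field_simp
  have hL0 : L ≤ 0 := le_of_tendsto_of_tendsto hslope hE hev
  rw [hL_def] at hL0
  rw [ge_iff_le]
  linarith
end

section
/- Let H be a real Hilbert space, k ∈ W^{1,1}(0,T) nonnegative and nonincreasing, and φ : [0,T] → H bounded and measurable. Then for almost all t ∈ [0,T], ⟨φ(t), d/dt(k*φ)(t)⟩ ≥ (1/2) d/dt (k * ‖φ‖²)(t) + (1/2) k(t)‖φ(t)‖². -/
open MeasureTheory intervalIntegral Filter Topology

private lemma aux_intervalIntegrable {E : Type*} [NormedAddCommGroup E] [NormedSpace ℝ E]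
    {k : ℝ → ℝ} {T B : ℝ} (hkc : ContinuousOn k (Set.Icc 0 T))
    (hkb : ∀ x ∈ Set.Icc (0:ℝ) T, |k x| ≤ B)
    {ψ : ℝ → E} (hψ : AEStronglyMeasurable ψ volume) {M : ℝ} (hψb : ∀ s, ‖ψ s‖ ≤ M)
    {c a b : ℝ} (hab : a ≤ b) (h1 : c - T ≤ a) (h2 : b ≤ c) :
    IntervalIntegrable (fun s => k (c - s) • ψ s) volume a b := by
  rw [intervalIntegrable_iff_integrableOn_Ioc_of_le hab]
  have hmem : ∀ s ∈ Set.Icc a b, c - s ∈ Set.Icc (0:ℝ) T := fun s hs =>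
    ⟨by linarith [hs.2], by linarith [hs.1]⟩
  have hcont : ContinuousOn (fun s => k (c - s)) (Set.Icc a b) :=
    hkc.comp ((continuous_const.sub continuous_id).continuousOn) hmem
  have hmeas : AEStronglyMeasurable (fun s => k (c - s) • ψ s)
      (volume.restrict (Set.Ioc a b)) := by
    refine AEStronglyMeasurable.smul ?_ hψ.restrict
    exact (hcont.aestronglyMeasurable measurableSet_Icc).mono_measure
      (Measure.restrict_mono Set.Ioc_subset_Icc_self le_rfl)
  refine Integrable.mono' (g := fun _ => B * M)
    (integrableOn_const measure_Ioc_lt_top.ne) hmeas ?_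
  filter_upwards [ae_restrict_mem measurableSet_Ioc] with s hs
  rw [norm_smul]
  have hb := hkb _ (hmem s (Set.Ioc_subset_Icc_self hs))
  exact mul_le_mul (by simpa [Real.norm_eq_abs] using hb) (hψb s) (norm_nonneg _)
    ((abs_nonneg _).trans hb)

/-- average of a monotone-nonincreasing continuous kernel over `[x, x+h]` tends to `k x`. -/
private lemma aux_avg_tendsto {k : ℝ → ℝ} {T x : ℝ}
    (hkc : ContinuousOn k (Set.Icc 0 T))
    (hkmono : ∀ s ∈ Set.Icc (0:ℝ) T, ∀ t ∈ Set.Icc (0:ℝ) T, s ≤ t → k t ≤ k s)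
    (hx0 : 0 ≤ x) (hxT : x < T) :
    Tendsto (fun h => h⁻¹ * ∫ s in x..x+h, k s) (𝓝[>](0:ℝ)) (𝓝 (k x)) := by
  have hxI : x ∈ Set.Icc (0:ℝ) T := ⟨hx0, hxT.le⟩
  have hev : Set.Ioo (0:ℝ) (T - x) ∈ 𝓝[>](0:ℝ) :=
    Ioo_mem_nhdsGT_of_mem ⟨le_rfl, by linarith⟩
  have hmemIcc : ∀ h ∈ Set.Ioo (0:ℝ) (T - x), ∀ u ∈ Set.Icc x (x+h), u ∈ Set.Icc (0:ℝ) T :=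
    fun h hh u hu => ⟨by linarith [hu.1], by linarith [hu.2, hh.2]⟩
  have hki : ∀ h ∈ Set.Ioo (0:ℝ) (T - x), IntervalIntegrable k volume x (x+h) := by
    intro h hh
    apply ContinuousOn.intervalIntegrable
    rw [Set.uIcc_of_le (by linarith [hh.1] : x ≤ x + h)]
    exact hkc.mono (fun u hu => hmemIcc h hh u hu)
  -- squeeze between k (x+h) and k x
  have h1 : ∀ᶠ h in 𝓝[>](0:ℝ), k (x+h) ≤ h⁻¹ * ∫ s in x..x+h, k s := by
    filter_upwards [hev] with h hh
    have hle : k (x+h) * h ≤ ∫ s in x..x+h, k s := by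
      have : ∫ s in x..x+h, k (x+h) = k (x+h) * h := by
        rw [intervalIntegral.integral_const]; simp [smul_eq_mul]; ring
      rw [← this]
      refine intervalIntegral.integral_mono_on (by linarith [hh.1])
        (intervalIntegrable_const) (hki h hh) (fun u hu => ?_)
      exact hkmono u (hmemIcc h hh u hu) (x+h) (hmemIcc h hh (x+h) ⟨by linarith [hh.1], le_rfl⟩)
        hu.2
    have hh0 : (0:ℝ) < h := hh.1
    calc k (x+h) = h⁻¹ * (k (x+h) * h) := by field_simp
      _ ≤ _ := mul_le_mul_of_nonneg_left hle (by positivity)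
  have h2 : ∀ᶠ h in 𝓝[>](0:ℝ), h⁻¹ * ∫ s in x..x+h, k s ≤ k x := by
    filter_upwards [hev] with h hh
    have hh0 : (0:ℝ) < h := hh.1
    have hle : ∫ s in x..x+h, k s ≤ k x * h := by
      have : ∫ s in x..x+h, k x = k x * h := by
        rw [intervalIntegral.integral_const]; simp [smul_eq_mul]; ring
      rw [← this]
      refine intervalIntegral.integral_mono_on (by linarith)
        (hki h hh) (intervalIntegrable_const) (fun u hu => ?_)
      exact hkmono x hxI u (hmemIcc h hh u hu) hu.1
    calc h⁻¹ * ∫ s in x..x+h, k s ≤ h⁻¹ * (k x * h) :=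
          mul_le_mul_of_nonneg_left hle (by positivity)
      _ = k x := by field_simp
  have h3 : Tendsto (fun h => k (x+h)) (𝓝[>](0:ℝ)) (𝓝 (k x)) := by
    have hcw : ContinuousWithinAt k (Set.Icc 0 T) x := hkc x hxI
    refine hcw.tendsto.comp ?_
    rw [tendsto_nhdsWithin_iff]
    constructor
    · have : Tendsto (fun h : ℝ => x + h) (𝓝 0) (𝓝 (x + 0)) :=
        (continuous_const.add continuous_id).tendsto 0
      simpa using this.mono_left nhdsWithin_le_nhds
    · filter_upwards [hev] with h hh
      exact ⟨by linarith [hh.1], by linarith [hh.2]⟩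
  exact tendsto_of_tendsto_of_tendsto_of_le_of_le' h3 tendsto_const_nhds h1 h2

/-- one-sided Lebesgue-point consequence of the two-sided average statement. -/
private lemma aux_leb_right {ψ : ℝ → ℝ} {t : ℝ} (hψ0 : ∀ s, 0 ≤ ψ s)
    (hint : ∀ a b : ℝ, IntegrableOn ψ (Set.Icc a b) volume)
    (hLt : Tendsto (fun r => ⨍ y in Metric.closedBall t r, ψ y) (𝓝[>](0:ℝ)) (𝓝 0)) :
    Tendsto (fun h => h⁻¹ * ∫ s in t..t+h, ψ s) (𝓝[>](0:ℝ)) (𝓝 0) := by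
  have h1 : ∀ᶠ h in 𝓝[>](0:ℝ), (0:ℝ) ≤ h⁻¹ * ∫ s in t..t+h, ψ s := by
    filter_upwards [self_mem_nhdsWithin] with h hh
    have hh0 : (0:ℝ) < h := hh
    refine mul_nonneg (by positivity) ?_
    exact intervalIntegral.integral_nonneg (by linarith) (fun u _ => hψ0 u)
  have h2 : ∀ᶠ h in 𝓝[>](0:ℝ),
      h⁻¹ * ∫ s in t..t+h, ψ s ≤ 2 * ⨍ y in Metric.closedBall t h, ψ y := by
    filter_upwards [self_mem_nhdsWithin] with h hh
    have hh0 : (0:ℝ) < h := hh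
    have hcb : Metric.closedBall t h = Set.Icc (t - h) (t + h) := Real.closedBall_eq_Icc
    have hile : (∫ s in t..t+h, ψ s) ≤ ∫ y in Metric.closedBall t h, ψ y := by
      rw [intervalIntegral.integral_of_le (by linarith), hcb]
      refine setIntegral_mono_set (hint (t-h) (t+h)) ?_ ?_
      · exact Filter.Eventually.of_forall fun s => hψ0 s
      · exact HasSubset.Subset.eventuallyLE
          (fun s hs => ⟨by linarith [hs.1], hs.2⟩)
    have havg : (⨍ y in Metric.closedBall t h, ψ y)
        = (2*h)⁻¹ * ∫ y in Metric.closedBall t h, ψ y := by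
      rw [setAverage_eq, Real.volume_real_closedBall (by linarith)]
      simp [smul_eq_mul]
    rw [havg]
    rw [show (2:ℝ) * ((2*h)⁻¹ * ∫ y in Metric.closedBall t h, ψ y)
        = h⁻¹ * ∫ y in Metric.closedBall t h, ψ y by field_simp]
    exact mul_le_mul_of_nonneg_left hile (by positivity)
  have h0 : Tendsto (fun h => 2 * ⨍ y in Metric.closedBall t h, ψ y) (𝓝[>](0:ℝ)) (𝓝 0) := by
    simpa using hLt.const_mul 2
  exact tendsto_of_tendsto_of_tendsto_of_le_of_le' tendsto_const_nhds h0 h1 h2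

set_option maxHeartbeats 2000000 in
/-- Hilbert-space version: for `k ∈ W^{1,1}(0,T)` nonnegative and nonincreasing and `φ` bounded
measurable with values in a real Hilbert space, for a.e. `t ∈ [0,T]`:
`⟨φ(t), d/dt(k*φ)(t)⟩ ≥ (1/2) d/dt (k*‖φ‖²)(t) + (1/2) k(t)‖φ(t)‖²`. -/
theorem convolution_inequality_hilbert
    {H : Type*} [NormedAddCommGroup H] [InnerProductSpace ℝ H] [CompleteSpace H]
    (T : ℝ) (hT : 0 < T)
    (k k' : ℝ → ℝ)
    (hk' : IntegrableOn k' (Set.Icc 0 T))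
    (hk : ∀ t ∈ Set.Icc (0:ℝ) T, k t = k 0 + ∫ s in (0:ℝ)..t, k' s)
    (hknonneg : ∀ t ∈ Set.Icc (0:ℝ) T, 0 ≤ k t)
    (hkmono : ∀ s ∈ Set.Icc (0:ℝ) T, ∀ t ∈ Set.Icc (0:ℝ) T, s ≤ t → k t ≤ k s)
    (φ : ℝ → H) (hφm : AEStronglyMeasurable φ volume) (M : ℝ) (hφb : ∀ t, ‖φ t‖ ≤ M)
    -- `D` is the a.e. derivative of `k*φ`, `D₂` that of `k*‖φ‖²`
    (D : ℝ → H) (D₂ : ℝ → ℝ)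
    (hD : ∀ᵐ t ∂(volume.restrict (Set.Icc (0:ℝ) T)),
      HasDerivAt (fun τ => ∫ s in (0:ℝ)..τ, k (τ - s) • φ s) (D t) t)
    (hD₂ : ∀ᵐ t ∂(volume.restrict (Set.Icc (0:ℝ) T)),
      HasDerivAt (fun τ => ∫ s in (0:ℝ)..τ, k (τ - s) * ‖φ s‖ ^ 2) (D₂ t) t) :
    ∀ᵐ t ∂(volume.restrict (Set.Icc (0:ℝ) T)),
      inner ℝ (φ t) (D t) ≥ (1 / 2 : ℝ) * D₂ t + (1 / 2 : ℝ) * k t * ‖φ t‖ ^ 2 := by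
  have hM0 : (0:ℝ) ≤ M := (norm_nonneg _).trans (hφb 0)
  have h0I : (0:ℝ) ∈ Set.Icc (0:ℝ) T := ⟨le_rfl, hT.le⟩
  have hk0 : 0 ≤ k 0 := hknonneg 0 h0I
  -- continuity of k on [0, T]
  have hkc : ContinuousOn k (Set.Icc 0 T) := by
    have h1 : ContinuousOn (fun x => k 0 + ∫ s in (0:ℝ)..x, k' s) (Set.Icc 0 T) := by
      refine continuousOn_const.add ?_
      have h2 := intervalIntegral.continuousOn_primitive_interval
        (a := 0) (b := T) (μ := volume) (f := k') (by rwa [Set.uIcc_of_le hT.le])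
      rwa [Set.uIcc_of_le hT.le] at h2
    exact h1.congr hk
  have hkb : ∀ x ∈ Set.Icc (0:ℝ) T, |k x| ≤ k 0 := fun x hx =>
    abs_le.mpr ⟨by linarith [hknonneg x hx], hkmono 0 h0I x hx hx.1⟩
  -- measurability facts
  have hnsq : AEStronglyMeasurable (fun s => ‖φ s‖^2) volume := by
    exact hφm.norm.pow 2
  have hφloc : LocallyIntegrable φ volume := by
    intro x
    refine ⟨Set.Icc (x-1) (x+1), Icc_mem_nhds (by linarith) (by linarith), ?_⟩
    exact Integrable.mono' (g := fun _ => M)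
      (integrableOn_const measure_Icc_lt_top.ne) hφm.restrict
      (Filter.Eventually.of_forall fun s => hφb s)
  have hLebAE : ∀ᵐ t ∂(volume : Measure ℝ),
      Tendsto (fun r => ⨍ y in Metric.closedBall t r, ‖φ y - φ t‖) (𝓝[>](0:ℝ)) (𝓝 0) := by
    filter_upwards [IsUnifLocDoublingMeasure.ae_tendsto_average_norm_sub (μ := volume) hφloc 1] with x hx
    refine hx (fun _ => x) id tendsto_id ?_
    filter_upwards [self_mem_nhdsWithin] with r hr
    have : (0:ℝ) < r := hr
    simpa [Metric.mem_closedBall] using by linarith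
  have hIoo : ∀ᵐ t ∂(volume.restrict (Set.Icc (0:ℝ) T)), t ∈ Set.Ioo (0:ℝ) T := by
    have h0 : ∀ᵐ t : ℝ, t ∈ Set.Icc (0:ℝ) T → t ∈ Set.Ioo (0:ℝ) T := by
      rw [ae_iff]
      refine measure_mono_null (fun x hx => ?_)
        (Set.Finite.measure_zero ((Set.finite_singleton T).insert (0:ℝ)) volume)
      simp only [Set.mem_setOf_eq, Classical.not_imp] at hx
      obtain ⟨⟨hx1, hx2⟩, hx3⟩ := hx
      simp only [Set.mem_Ioo, not_and_or, not_lt] at hx3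
      rcases hx3 with h | h
      · exact Set.mem_insert_iff.mpr (Or.inl (le_antisymm h hx1))
      · exact Set.mem_insert_iff.mpr (Or.inr (by simp [le_antisymm hx2 h]))
    filter_upwards [ae_restrict_mem measurableSet_Icc, ae_restrict_of_ae h0] with t h1 h2
    exact h2 h1
  filter_upwards [hD, hD₂, ae_restrict_of_ae hLebAE, hIoo] with t hDt hD₂t hLt ht
  obtain ⟨ht0, htT⟩ := ht
  obtain ⟨F, hFdef⟩ : ∃ F : ℝ → H, F = fun τ => ∫ s in (0:ℝ)..τ, k (τ - s) • φ s := ⟨_, rfl⟩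
  obtain ⟨F₂, hF₂def⟩ : ∃ F₂ : ℝ → ℝ, F₂ = fun τ => ∫ s in (0:ℝ)..τ, k (τ - s) * ‖φ s‖ ^ 2 :=
    ⟨_, rfl⟩
  obtain ⟨g, hgdef⟩ : ∃ g : ℝ → ℝ,
      g = fun s => (inner ℝ (φ t) (φ s) : ℝ) - (1/2 : ℝ) * ‖φ s‖ ^ 2 := ⟨_, rfl⟩
  rw [← hFdef] at hDt
  rw [← hF₂def] at hD₂t
  have hgid : ∀ s, g s = (1/2 : ℝ) * ‖φ t‖ ^ 2 - (1/2 : ℝ) * ‖φ t - φ s‖ ^ 2 := by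
    intro s
    have hns := norm_sub_sq_real (φ t) (φ s)
    simp only [hgdef]
    linarith
  have hgb : ∀ s, ‖g s‖ ≤ M * M + (M + M) * (M + M) := by
    intro s
    have h1 : ‖φ t‖ ^ 2 ≤ M * M := by nlinarith [hφb t, norm_nonneg (φ t)]
    have h2 : ‖φ t - φ s‖ ^ 2 ≤ (M + M) * (M + M) := by
      have h4 := norm_sub_le (φ t) (φ s)
      nlinarith [hφb t, hφb s, norm_nonneg (φ t - φ s)]
    have h3 : (0:ℝ) ≤ ‖φ t - φ s‖ ^ 2 := by positivity
    have h5 : (0:ℝ) ≤ ‖φ t‖ ^ 2 := by positivity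
    rw [Real.norm_eq_abs, abs_le]
    constructor <;>
      linarith [hgid s, mul_nonneg hM0 hM0, mul_nonneg (by linarith : (0:ℝ) ≤ M + M) (by linarith : (0:ℝ) ≤ M + M)]
  have hgm : AEStronglyMeasurable g volume := by
    rw [hgdef]
    exact (AEStronglyMeasurable.inner aestronglyMeasurable_const hφm).sub (hnsq.const_mul _)
  have hipb : ∀ s, ‖(inner ℝ (φ t) (φ s) : ℝ)‖ ≤ M * M := fun s => by
    rw [Real.norm_eq_abs]
    exact (abs_real_inner_le_norm _ _).trans
      (mul_le_mul (hφb t) (hφb s) (norm_nonneg _) hM0)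
  have hipm : AEStronglyMeasurable (fun s => (inner ℝ (φ t) (φ s) : ℝ)) volume :=
    AEStronglyMeasurable.inner aestronglyMeasurable_const hφm
  have hsqb : ∀ s, ‖(‖φ s‖ ^ 2 : ℝ)‖ ≤ M * M := fun s => by
    rw [Real.norm_eq_abs, abs_of_nonneg (by positivity)]
    nlinarith [hφb s, norm_nonneg (φ s)]
  have hwb : ∀ s, ‖(‖φ t - φ s‖ ^ 2 : ℝ)‖ ≤ (M + M) * (M + M) := fun s => by
    rw [Real.norm_eq_abs, abs_of_nonneg (by positivity)]
    have := norm_sub_le (φ t) (φ s)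
    nlinarith [hφb t, hφb s, norm_nonneg (φ t - φ s)]
  have hwm : AEStronglyMeasurable (fun s => (‖φ t - φ s‖ ^ 2 : ℝ)) volume := by
    exact (aestronglyMeasurable_const.sub hφm).norm.pow 2
  -- generic interval-integrability producer for `k (d - ·) * ψ`
  have mkI : ∀ (ψ : ℝ → ℝ) (C : ℝ), AEStronglyMeasurable ψ volume → (∀ s, ‖ψ s‖ ≤ C) →
      ∀ (d a b : ℝ), a ≤ b → d - T ≤ a → b ≤ d →
      IntervalIntegrable (fun s => k (d - s) * ψ s) volume a b := by
    intro ψ C hψ hC d a b hab h1 h2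
    simpa [smul_eq_mul] using aux_intervalIntegrable hkc hkb hψ hC hab h1 h2
  have ione : ∀ (d a b : ℝ), a ≤ b → d - T ≤ a → b ≤ d →
      IntervalIntegrable (fun s => k (d - s)) volume a b := by
    intro d a b hab h1 h2
    simpa using mkI (fun _ => (1:ℝ)) 1 aestronglyMeasurable_const (by simp) d a b hab h1 h2
  have kint : ∀ a b : ℝ, 0 ≤ a → a ≤ b → b ≤ T → IntervalIntegrable k volume a b := by
    intro a b h1 h2 h3
    apply ContinuousOn.intervalIntegrable
    rw [Set.uIcc_of_le h2]
    exact hkc.mono (fun u hu => ⟨by linarith [hu.1], by linarith [hu.2]⟩)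
  have iψd : ∀ a b : ℝ, IntegrableOn (fun s => ‖φ s - φ t‖) (Set.Icc a b) volume := by
    intro a b
    refine Integrable.mono' (g := fun _ => M + M)
      (integrableOn_const measure_Icc_lt_top.ne)
      ((hφm.sub aestronglyMeasurable_const).norm.restrict) ?_
    refine Filter.Eventually.of_forall fun s => ?_
    rw [Real.norm_eq_abs, abs_of_nonneg (norm_nonneg _)]
    calc ‖φ s - φ t‖ ≤ ‖φ s‖ + ‖φ t‖ := norm_sub_le _ _
      _ ≤ M + M := add_le_add (hφb s) (hφb t)
  have iψdI : ∀ a b : ℝ, a ≤ b → IntervalIntegrable (fun s => ‖φ s - φ t‖) volume a b := by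
    intro a b hab
    rw [intervalIntegrable_iff_integrableOn_Ioc_of_le hab]
    exact (iψd a b).mono_set Set.Ioc_subset_Icc_self
  have hLeb : Tendsto (fun h => h⁻¹ * ∫ s in t..t+h, ‖φ s - φ t‖) (𝓝[>](0:ℝ)) (𝓝 0) :=
    aux_leb_right (fun s => norm_nonneg _) iψd hLt
  -- difference-quotient limits
  have hq1 := hDt.tendsto_slope_zero_right
  have hq2 := hD₂t.tendsto_slope_zero_right
  obtain ⟨Q, hQdef⟩ : ∃ Q : ℝ → ℝ, Q = fun h =>
      h⁻¹ * ((inner ℝ (φ t) (F (t+h) - F t) : ℝ) - (1/2 : ℝ) * (F₂ (t+h) - F₂ t)) := ⟨_, rfl⟩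
  have hq : Tendsto Q (𝓝[>](0:ℝ)) (𝓝 ((inner ℝ (φ t) (D t) : ℝ) - (1/2 : ℝ) * D₂ t)) := by
    have ha : Tendsto (fun h : ℝ => (inner ℝ (φ t) (h⁻¹ • (F (t+h) - F t)) : ℝ)) (𝓝[>](0:ℝ))
        (𝓝 (inner ℝ (φ t) (D t))) := Filter.Tendsto.inner tendsto_const_nhds hq1
    have hb := hq2.const_mul (1/2 : ℝ)
    refine (ha.sub hb).congr (fun h => ?_)
    simp only [hQdef, real_inner_smul_right, smul_eq_mul]
    ring
  -- limits of kernel averages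
  have hevI : Set.Ioo (0:ℝ) (T - t) ∈ 𝓝[>](0:ℝ) :=
    Ioo_mem_nhdsGT_of_mem (Set.mem_Ico.mpr ⟨le_rfl, by linarith⟩)
  have c1 : Tendsto (fun h => h⁻¹ * ∫ s in t..t+h, k s) (𝓝[>](0:ℝ)) (𝓝 (k t)) :=
    aux_avg_tendsto hkc hkmono ht0.le htT
  have c2 : Tendsto (fun h => h⁻¹ * ∫ s in (0:ℝ)..h, k s) (𝓝[>](0:ℝ)) (𝓝 (k 0)) := by
    have h1 := aux_avg_tendsto hkc hkmono le_rfl hT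
    exact h1.congr (fun h => by rw [zero_add])
  have c3a : Tendsto (fun h => h⁻¹ * ∫ s in t..t+h, k (t+h-s) * ‖φ t - φ s‖ ^ 2)
      (𝓝[>](0:ℝ)) (𝓝 0) := by
    have hub : ∀ᶠ h in 𝓝[>](0:ℝ),
        h⁻¹ * ∫ s in t..t+h, k (t+h-s) * ‖φ t - φ s‖ ^ 2
          ≤ (k 0 * (M + M)) * (h⁻¹ * ∫ s in t..t+h, ‖φ s - φ t‖) := by
      filter_upwards [hevI] with h hh
      have hh0 : (0:ℝ) < h := hh.1
      have hint1 : IntervalIntegrable (fun s => k (t+h-s) * ‖φ t - φ s‖ ^ 2) volume t (t+h) :=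
        mkI _ ((M+M)*(M+M)) hwm hwb (t+h) t (t+h) (by linarith) (by linarith [hh.2]) le_rfl
      have hint2 : IntervalIntegrable (fun s => (k 0 * (M + M)) * ‖φ s - φ t‖) volume t (t+h) :=
        (iψdI t (t+h) (by linarith)).const_mul _
      have hmono : (∫ s in t..t+h, k (t+h-s) * ‖φ t - φ s‖ ^ 2)
          ≤ ∫ s in t..t+h, (k 0 * (M + M)) * ‖φ s - φ t‖ := by
        refine intervalIntegral.integral_mono_on (by linarith) hint1 hint2 (fun s hs => ?_)
        have hmem : t + h - s ∈ Set.Icc (0:ℝ) T :=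
          ⟨by linarith [hs.2], by linarith [hs.1, hh.2]⟩
        have hk1 : 0 ≤ k (t+h-s) := hknonneg _ hmem
        have hk2 : k (t+h-s) ≤ k 0 := hkmono 0 h0I _ hmem hmem.1
        have hn1 : ‖φ t - φ s‖ ≤ M + M := by
          calc ‖φ t - φ s‖ ≤ ‖φ t‖ + ‖φ s‖ := norm_sub_le _ _
            _ ≤ M + M := add_le_add (hφb t) (hφb s)
        have hn0 : (0:ℝ) ≤ ‖φ t - φ s‖ := norm_nonneg _
        rw [norm_sub_rev (φ s) (φ t), pow_two]
        calc k (t+h-s) * (‖φ t - φ s‖ * ‖φ t - φ s‖)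
            ≤ k 0 * ((M + M) * ‖φ t - φ s‖) := by
              apply mul_le_mul hk2 (mul_le_mul_of_nonneg_right hn1 hn0) (by positivity) hk0
          _ = k 0 * (M + M) * ‖φ t - φ s‖ := by ring
      calc h⁻¹ * ∫ s in t..t+h, k (t+h-s) * ‖φ t - φ s‖ ^ 2
          ≤ h⁻¹ * ∫ s in t..t+h, (k 0 * (M + M)) * ‖φ s - φ t‖ :=
            mul_le_mul_of_nonneg_left hmono (by positivity)
        _ = (k 0 * (M + M)) * (h⁻¹ * ∫ s in t..t+h, ‖φ s - φ t‖) := by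
            rw [intervalIntegral.integral_const_mul]; ring
    have hlb : ∀ᶠ h in 𝓝[>](0:ℝ),
        (0:ℝ) ≤ h⁻¹ * ∫ s in t..t+h, k (t+h-s) * ‖φ t - φ s‖ ^ 2 := by
      filter_upwards [hevI] with h hh
      have hh0 : (0:ℝ) < h := hh.1
      refine mul_nonneg (by positivity)
        (intervalIntegral.integral_nonneg (by linarith) (fun u hu => ?_))
      have hmem : t + h - u ∈ Set.Icc (0:ℝ) T :=
        ⟨by linarith [hu.2], by linarith [hu.1, hh.2]⟩
      exact mul_nonneg (hknonneg _ hmem) (by positivity)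
    have h0' : Tendsto (fun h => (k 0 * (M + M)) * (h⁻¹ * ∫ s in t..t+h, ‖φ s - φ t‖))
        (𝓝[>](0:ℝ)) (𝓝 0) := by
      simpa using hLeb.const_mul (k 0 * (M + M))
    exact tendsto_of_tendsto_of_tendsto_of_le_of_le' tendsto_const_nhds h0' hlb hub
  have c3 : Tendsto (fun h => h⁻¹ * ∫ s in t..t+h, k (t+h-s) * g s) (𝓝[>](0:ℝ))
      (𝓝 ((1/2:ℝ) * ‖φ t‖ ^ 2 * k 0)) := by
    have hid : (fun h => (1/2:ℝ) * ‖φ t‖ ^ 2 * (h⁻¹ * ∫ s in (0:ℝ)..h, k s)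
          - (1/2:ℝ) * (h⁻¹ * ∫ s in t..t+h, k (t+h-s) * ‖φ t - φ s‖ ^ 2))
        =ᶠ[𝓝[>](0:ℝ)] (fun h => h⁻¹ * ∫ s in t..t+h, k (t+h-s) * g s) := by
      filter_upwards [hevI] with h hh
      have hh0 : (0:ℝ) < h := hh.1
      have hint1 : IntervalIntegrable (fun s => k (t+h-s)) volume t (t+h) :=
        ione (t+h) t (t+h) (by linarith) (by linarith [hh.2]) le_rfl
      have hint2 : IntervalIntegrable (fun s => k (t+h-s) * ‖φ t - φ s‖ ^ 2) volume t (t+h) :=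
        mkI _ ((M+M)*(M+M)) hwm hwb (t+h) t (t+h) (by linarith) (by linarith [hh.2]) le_rfl
      have e1 : (∫ s in t..t+h, k (t+h-s) * g s)
          = (1/2:ℝ) * ‖φ t‖ ^ 2 * (∫ s in t..t+h, k (t+h-s))
            - (1/2:ℝ) * ∫ s in t..t+h, k (t+h-s) * ‖φ t - φ s‖ ^ 2 := by
        rw [← intervalIntegral.integral_const_mul, ← intervalIntegral.integral_const_mul,
          ← intervalIntegral.integral_sub (hint1.const_mul _) (hint2.const_mul _)]
        refine intervalIntegral.integral_congr (fun s _ => ?_)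
        rw [hgid s]; ring
      have e2 : (∫ s in t..t+h, k (t+h-s)) = ∫ s in (0:ℝ)..h, k s := by
        rw [intervalIntegral.integral_comp_sub_left k (t+h),
          show t+h-(t+h) = (0:ℝ) by ring, show t+h-t = h by ring]
      rw [e1, e2]; ring
    have h4 := (c2.const_mul ((1/2:ℝ) * ‖φ t‖ ^ 2)).sub (c3a.const_mul (1/2:ℝ))
    rw [mul_zero, sub_zero] at h4
    exact Tendsto.congr' hid h4
  obtain ⟨Lq, hLqdef⟩ : ∃ Lq : ℝ → ℝ, Lq = fun h =>
      (1/2:ℝ) * ‖φ t‖ ^ 2 * (h⁻¹ * ((∫ s in t..t+h, k s) - ∫ s in (0:ℝ)..h, k s))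
        + h⁻¹ * ∫ s in t..t+h, k (t+h-s) * g s := ⟨_, rfl⟩
  have hL : Tendsto Lq (𝓝[>](0:ℝ)) (𝓝 ((1/2:ℝ) * k t * ‖φ t‖ ^ 2)) := by
    have h4 := ((c1.sub c2).const_mul ((1/2:ℝ) * ‖φ t‖ ^ 2)).add c3
    rw [show (1/2:ℝ) * ‖φ t‖ ^ 2 * (k t - k 0) + (1/2:ℝ) * ‖φ t‖ ^ 2 * k 0
        = (1/2:ℝ) * k t * ‖φ t‖ ^ 2 by ring] at h4
    refine h4.congr (fun h => ?_)
    simp only [hLqdef]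
    ring
  -- the eventual inequality
  have hineq : ∀ᶠ h in 𝓝[>](0:ℝ), Lq h ≤ Q h := by
    filter_upwards [hevI] with h hh
    have hh0 : (0:ℝ) < h := hh.1
    have hhT : t + h < T := by linarith [hh.2]
    have iφ1 : IntervalIntegrable (fun s => k (t+h - s) • φ s) volume 0 t :=
      aux_intervalIntegrable hkc hkb hφm hφb ht0.le (by linarith) (by linarith)
    have iφ2 : IntervalIntegrable (fun s => k (t+h - s) • φ s) volume t (t+h) :=
      aux_intervalIntegrable hkc hkb hφm hφb (by linarith) (by linarith) le_rfl
    have iφ3 : IntervalIntegrable (fun s => k (t - s) • φ s) volume 0 t :=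
      aux_intervalIntegrable hkc hkb hφm hφb ht0.le (by linarith) le_rfl
    have iip1 : IntervalIntegrable (fun s => k (t+h-s) * (inner ℝ (φ t) (φ s) : ℝ)) volume 0 t :=
      mkI _ (M*M) hipm hipb (t+h) 0 t ht0.le (by linarith) (by linarith)
    have iip2 : IntervalIntegrable (fun s => k (t+h-s) * (inner ℝ (φ t) (φ s) : ℝ)) volume t (t+h) :=
      mkI _ (M*M) hipm hipb (t+h) t (t+h) (by linarith) (by linarith) le_rfl
    have iip3 : IntervalIntegrable (fun s => k (t-s) * (inner ℝ (φ t) (φ s) : ℝ)) volume 0 t :=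
      mkI _ (M*M) hipm hipb t 0 t ht0.le (by linarith) le_rfl
    have isq1 : IntervalIntegrable (fun s => k (t+h-s) * ‖φ s‖ ^ 2) volume 0 t :=
      mkI _ (M*M) hnsq hsqb (t+h) 0 t ht0.le (by linarith) (by linarith)
    have isq2 : IntervalIntegrable (fun s => k (t+h-s) * ‖φ s‖ ^ 2) volume t (t+h) :=
      mkI _ (M*M) hnsq hsqb (t+h) t (t+h) (by linarith) (by linarith) le_rfl
    have isq3 : IntervalIntegrable (fun s => k (t-s) * ‖φ s‖ ^ 2) volume 0 t :=
      mkI _ (M*M) hnsq hsqb t 0 t ht0.le (by linarith) le_rfl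
    have ig1 : IntervalIntegrable (fun s => k (t+h-s) * g s) volume 0 t :=
      mkI _ _ hgm hgb (t+h) 0 t ht0.le (by linarith) (by linarith)
    have ig3 : IntervalIntegrable (fun s => k (t-s) * g s) volume 0 t :=
      mkI _ _ hgm hgb t 0 t ht0.le (by linarith) le_rfl
    have ionec : IntervalIntegrable (fun s => k (t+h-s)) volume 0 t :=
      ione (t+h) 0 t ht0.le (by linarith) (by linarith)
    have ionet : IntervalIntegrable (fun s => k (t-s)) volume 0 t :=
      ione t 0 t ht0.le (by linarith) le_rfl
    -- pushing the inner product inside integrals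
    have hip : ∀ (d a b : ℝ), IntervalIntegrable (fun s => k (d - s) • φ s) volume a b →
        (inner ℝ (φ t) (∫ s in a..b, k (d - s) • φ s) : ℝ)
          = ∫ s in a..b, k (d - s) * (inner ℝ (φ t) (φ s) : ℝ) := by
      intro d a b hi
      have hcomm := ContinuousLinearMap.intervalIntegral_comp_comm (innerSL ℝ (φ t)) hi
      calc (inner ℝ (φ t) (∫ s in a..b, k (d - s) • φ s) : ℝ)
          = (innerSL ℝ (φ t)) (∫ s in a..b, k (d - s) • φ s) := rfl
        _ = ∫ s in a..b, (innerSL ℝ (φ t)) (k (d - s) • φ s) := hcomm.symm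
        _ = ∫ s in a..b, k (d - s) * (inner ℝ (φ t) (φ s) : ℝ) := by
            refine intervalIntegral.integral_congr (fun s _ => ?_)
            simp [real_inner_smul_right]
    have hFc : F (t+h) = (∫ s in (0:ℝ)..t, k (t+h-s) • φ s)
        + ∫ s in t..(t+h), k (t+h-s) • φ s := by
      simp only [hFdef]
      exact (intervalIntegral.integral_add_adjacent_intervals iφ1 iφ2).symm
    have hFt : F t = ∫ s in (0:ℝ)..t, k (t - s) • φ s := by simp only [hFdef]
    have e1 : (inner ℝ (φ t) (F (t+h) - F t) : ℝ)
        = (∫ s in (0:ℝ)..t, k (t+h-s) * (inner ℝ (φ t) (φ s):ℝ))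
          + (∫ s in t..t+h, k (t+h-s) * (inner ℝ (φ t) (φ s):ℝ))
          - (∫ s in (0:ℝ)..t, k (t-s) * (inner ℝ (φ t) (φ s):ℝ)) := by
      rw [inner_sub_right, hFc, inner_add_right, hFt, hip (t+h) 0 t iφ1,
        hip (t+h) t (t+h) iφ2, hip t 0 t iφ3]
    have e2 : F₂ (t+h) - F₂ t
        = (∫ s in (0:ℝ)..t, k (t+h-s) * ‖φ s‖ ^ 2) + (∫ s in t..t+h, k (t+h-s) * ‖φ s‖ ^ 2)
          - ∫ s in (0:ℝ)..t, k (t-s) * ‖φ s‖ ^ 2 := by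
      simp only [hF₂def]
      rw [← intervalIntegral.integral_add_adjacent_intervals isq1 isq2]
    have e3 : ∀ (d a b : ℝ),
        IntervalIntegrable (fun s => k (d-s) * (inner ℝ (φ t) (φ s) : ℝ)) volume a b →
        IntervalIntegrable (fun s => k (d-s) * ‖φ s‖ ^ 2) volume a b →
        (∫ s in a..b, k (d-s) * g s)
          = (∫ s in a..b, k (d-s) * (inner ℝ (φ t) (φ s) : ℝ))
            - (1/2:ℝ) * ∫ s in a..b, k (d-s) * ‖φ s‖ ^ 2 := by
      intro d a b h1 h2
      rw [← intervalIntegral.integral_const_mul,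
        ← intervalIntegral.integral_sub h1 (h2.const_mul _)]
      refine intervalIntegral.integral_congr (fun s _ => ?_)
      simp only [hgdef]
      ring
    have e4 : (∫ s in (0:ℝ)..t, k (t+h-s)) - (∫ s in (0:ℝ)..t, k (t-s))
        = (∫ s in t..t+h, k s) - ∫ s in (0:ℝ)..h, k s := by
      have ec : (∫ s in (0:ℝ)..t, k (t+h-s)) = ∫ x in h..(t+h), k x := by
        rw [intervalIntegral.integral_comp_sub_left k (t+h),
          show t+h-t = h by ring, show t+h-(0:ℝ) = t+h by ring]
      have et : (∫ s in (0:ℝ)..t, k (t-s)) = ∫ x in (0:ℝ)..t, k x := by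
        rw [intervalIntegral.integral_comp_sub_left k t,
          show t-t = (0:ℝ) by ring, show t-(0:ℝ) = t by ring]
      have a1 := intervalIntegral.integral_add_adjacent_intervals
        (kint 0 h le_rfl (by linarith) (by linarith))
        (kint h (t+h) (by linarith) (by linarith) (by linarith))
      have a2 := intervalIntegral.integral_add_adjacent_intervals
        (kint 0 t le_rfl ht0.le htT.le)
        (kint t (t+h) ht0.le (by linarith) (by linarith))
      rw [ec, et]
      linarith [a1, a2]
    have e5 : ((∫ s in (0:ℝ)..t, k (t+h-s)) - ∫ s in (0:ℝ)..t, k (t-s)) * ((1/2:ℝ)*‖φ t‖^2)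
        ≤ (∫ s in (0:ℝ)..t, k (t+h-s) * g s) - ∫ s in (0:ℝ)..t, k (t-s) * g s := by
      have elhs : ((∫ s in (0:ℝ)..t, k (t+h-s)) - ∫ s in (0:ℝ)..t, k (t-s)) * ((1/2:ℝ)*‖φ t‖^2)
          = ∫ s in (0:ℝ)..t, (k (t+h-s) - k (t-s)) * ((1/2:ℝ)*‖φ t‖^2) := by
        rw [← intervalIntegral.integral_sub ionec ionet, ← intervalIntegral.integral_mul_const]
      have erhs : (∫ s in (0:ℝ)..t, k (t+h-s) * g s) - (∫ s in (0:ℝ)..t, k (t-s) * g s)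
          = ∫ s in (0:ℝ)..t, (k (t+h-s) * g s - k (t-s) * g s) :=
        (intervalIntegral.integral_sub ig1 ig3).symm
      rw [elhs, erhs]
      refine intervalIntegral.integral_mono_on ht0.le ((ionec.sub ionet).mul_const _)
        (ig1.sub ig3) (fun s hs => ?_)
      have hm1 : t - s ∈ Set.Icc (0:ℝ) T := ⟨by linarith [hs.2], by linarith [hs.1]⟩
      have hm2 : t + h - s ∈ Set.Icc (0:ℝ) T := ⟨by linarith [hs.2], by linarith [hs.1]⟩
      have hΔ : k (t+h-s) ≤ k (t-s) := hkmono (t-s) hm1 (t+h-s) hm2 (by linarith)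
      have hgle : g s ≤ (1/2:ℝ)*‖φ t‖^2 := by
        have h6 := hgid s
        have h7 : (0:ℝ) ≤ ‖φ t - φ s‖ ^ 2 := by positivity
        linarith
      nlinarith [mul_nonneg (sub_nonneg.mpr hΔ) (sub_nonneg.mpr hgle)]
    have key : (1/2:ℝ) * ‖φ t‖ ^ 2 * ((∫ s in t..t+h, k s) - ∫ s in (0:ℝ)..h, k s)
        + (∫ s in t..t+h, k (t+h-s) * g s)
        ≤ (inner ℝ (φ t) (F (t+h) - F t) : ℝ) - (1/2:ℝ) * (F₂ (t+h) - F₂ t) := by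
      have e31 := e3 (t+h) 0 t iip1 isq1
      have e32 := e3 (t+h) t (t+h) iip2 isq2
      have e33 := e3 t 0 t iip3 isq3
      have e7 : (1/2:ℝ) * ‖φ t‖ ^ 2 * ((∫ s in t..t+h, k s) - ∫ s in (0:ℝ)..h, k s)
          = ((∫ s in (0:ℝ)..t, k (t+h-s)) - ∫ s in (0:ℝ)..t, k (t-s)) * ((1/2:ℝ)*‖φ t‖^2) := by
        rw [e4]; ring
      linarith [e1, e2, e31, e32, e33, e5, e7]
    have hQh : Q h = h⁻¹ * ((inner ℝ (φ t) (F (t+h) - F t) : ℝ)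
        - (1/2:ℝ) * (F₂ (t+h) - F₂ t)) := by simp only [hQdef]
    have hLqh : Lq h = h⁻¹ * ((1/2:ℝ) * ‖φ t‖ ^ 2 * ((∫ s in t..t+h, k s)
        - ∫ s in (0:ℝ)..h, k s) + ∫ s in t..t+h, k (t+h-s) * g s) := by
      simp only [hLqdef]; ring
    rw [hQh, hLqh]
    exact mul_le_mul_of_nonneg_left key (by positivity)
  have hfin : (1/2:ℝ) * k t * ‖φ t‖ ^ 2 ≤ (inner ℝ (φ t) (D t) : ℝ) - (1/2:ℝ) * D₂ t :=
    le_of_tendsto_of_tendsto hL hq hineq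
  rw [ge_iff_le]
  linarith [hfin]
end

section
/- (Fractional integration by parts) Let H be a real Hilbert space, φ₁ ∈ L²(0,T;H), φ₂ ∈ H¹(0,T;H), and α ∈ (0,1). Then ∫₀ᵀ ⟨∂_t(g_{1−α}*φ₁)(t), φ₂(t)⟩ dt = −∫₀ᵀ ⟨φ₁(t), (g_{1−α} *' ∂_t φ₂)(t)⟩ dt + ⟨(g_{1−α}*φ₁)(T), φ₂(T)⟩ − ⟨(g_{1−α}*φ₁)(0), φ₂(0)⟩, where (g*'ψ)(t) = ∫_t^T g(s−t)ψ(s) ds, assuming g_{1−α}*φ₁ is absolutely continuous with L² derivative. -/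
open MeasureTheory intervalIntegral RealInnerProductSpace

/-- Riemann--Liouville kernel `g_β(t) = t^(β-1)/Γ(β)`. -/
noncomputable def rlKernel (β t : ℝ) : ℝ := t ^ (β - 1) / Real.Gamma β

namespace FracIBP

open Set

lemma rl_nonneg {α : ℝ} (hα1 : α < 1) {x : ℝ} (hx : 0 ≤ x) : 0 ≤ rlKernel (1 - α) x :=
  div_nonneg (Real.rpow_nonneg hx _) (Real.Gamma_pos_of_pos (by linarith)).le

lemma rl_meas (α : ℝ) : Measurable (rlKernel (1 - α)) := by
  unfold rlKernel; fun_prop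

lemma rl_ii {α : ℝ} (hα1 : α < 1) (a b : ℝ) :
    IntervalIntegrable (rlKernel (1 - α)) volume a b := by
  have h := (intervalIntegrable_rpow' (a := a) (b := b) (r := (1 - α) - 1)
    (by linarith)).div_const (Real.Gamma (1 - α))
  unfold rlKernel
  exact h

lemma inter_Ioi {T u : ℝ} (hu : 0 ≤ u) : Ioc 0 T ∩ Ioi u = Ioc u T := by
  ext x
  simp only [mem_inter_iff, mem_Ioc, mem_Ioi]
  constructor
  · rintro ⟨⟨_, h2⟩, h3⟩; exact ⟨h3, h2⟩
  · rintro ⟨h1, h2⟩; exact ⟨⟨lt_of_le_of_lt hu h1, h2⟩, h1⟩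

lemma inter_Iio {T s : ℝ} (hs : s ≤ T) : Ioc 0 T ∩ Iio s = Ioo 0 s := by
  ext x
  simp only [mem_inter_iff, mem_Ioc, mem_Iio, mem_Ioo]
  constructor
  · rintro ⟨⟨h1, _⟩, h3⟩; exact ⟨h1, h3⟩
  · rintro ⟨h1, h2⟩; exact ⟨⟨h1, h2.le.trans hs⟩, h2⟩

/-- Integrability of the shifted kernel on the right fiber. -/
lemma fibR {α T u : ℝ} (hα1 : α < 1) (hu : u ∈ Ioc (0:ℝ) T) :
    Integrable (fun s => (Ioi u).indicator (fun s => rlKernel (1 - α) (s - u)) s)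
      (volume.restrict (Ioc 0 T)) := by
  rw [integrable_indicator_iff measurableSet_Ioi, IntegrableOn,
    Measure.restrict_restrict measurableSet_Ioi, inter_comm, inter_Ioi hu.1.le]
  have h := (rl_ii hα1 0 (T - u)).comp_sub_right u
  rw [zero_add, sub_add_cancel] at h
  exact (intervalIntegrable_iff_integrableOn_Ioc_of_le hu.2).mp h

/-- Integrability of the shifted kernel on the left fiber. -/
lemma fibL {α T s : ℝ} (hα1 : α < 1) (hs : s ∈ Ioc (0:ℝ) T) :
    Integrable (fun u => (Iio s).indicator (fun u => rlKernel (1 - α) (s - u)) u)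
      (volume.restrict (Ioc 0 T)) := by
  rw [integrable_indicator_iff measurableSet_Iio, IntegrableOn,
    Measure.restrict_restrict measurableSet_Iio, inter_comm, inter_Iio hs.2]
  have h := ((rl_ii hα1 0 s).comp_sub_left s).symm
  rw [sub_zero, sub_self] at h
  exact (intervalIntegrable_iff_integrableOn_Ioo_of_le hs.1.le).mp h

/-- Uniform bound for the integral of the shifted kernel (right fibers). -/
lemma fibR_bound {α T u : ℝ} (hα1 : α < 1) (hu : u ∈ Ioc (0:ℝ) T) :
    ∫ s, ‖(Ioi u).indicator (fun s => rlKernel (1 - α) (s - u)) s‖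
        ∂(volume.restrict (Ioc 0 T))
      ≤ ∫ v in (0:ℝ)..T, rlKernel (1 - α) v := by
  simp_rw [norm_indicator_eq_indicator_norm]
  rw [setIntegral_indicator measurableSet_Ioi, inter_Ioi hu.1.le]
  have h2 : (∫ s in Ioc u T, ‖rlKernel (1 - α) (s - u)‖)
      = ∫ s in Ioc u T, rlKernel (1 - α) (s - u) := by
    refine setIntegral_congr_fun measurableSet_Ioc fun s hs => ?_
    exact Real.norm_of_nonneg (rl_nonneg hα1 (by linarith [hs.1]))
  rw [h2, ← intervalIntegral.integral_of_le hu.2,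
    intervalIntegral.integral_comp_sub_right (fun v => rlKernel (1 - α) v) u, sub_self]
  have h3 := integral_interval_sub_left (rl_ii hα1 0 T) (rl_ii hα1 0 (T - u))
  have h4 : 0 ≤ ∫ v in (T - u)..T, rlKernel (1 - α) v := by
    refine intervalIntegral.integral_nonneg (by linarith [hu.1]) fun v hv => ?_
    exact rl_nonneg hα1 (le_trans (by linarith [hu.2]) hv.1)
  linarith

/-- Uniform bound for the integral of the shifted kernel (left fibers). -/
lemma fibL_bound {α T s : ℝ} (hα1 : α < 1) (hs : s ∈ Ioc (0:ℝ) T) :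
    ∫ u, ‖(Iio s).indicator (fun u => rlKernel (1 - α) (s - u)) u‖
        ∂(volume.restrict (Ioc 0 T))
      ≤ ∫ v in (0:ℝ)..T, rlKernel (1 - α) v := by
  simp_rw [norm_indicator_eq_indicator_norm]
  rw [setIntegral_indicator measurableSet_Iio, inter_Iio hs.2]
  have h2 : (∫ u in Ioo 0 s, ‖rlKernel (1 - α) (s - u)‖)
      = ∫ u in Ioo 0 s, rlKernel (1 - α) (s - u) := by
    refine setIntegral_congr_fun measurableSet_Ioo fun u hu => ?_
    exact Real.norm_of_nonneg (rl_nonneg hα1 (by linarith [hu.2]))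
  rw [h2, ← integral_Ioc_eq_integral_Ioo, ← intervalIntegral.integral_of_le hs.1.le,
    intervalIntegral.integral_comp_sub_left (fun v => rlKernel (1 - α) v) s, sub_zero, sub_self]
  have h3 := integral_interval_sub_left (rl_ii hα1 0 T) (rl_ii hα1 0 s)
  have h4 : 0 ≤ ∫ v in s..T, rlKernel (1 - α) v := by
    refine intervalIntegral.integral_nonneg hs.2 fun v hv => ?_
    exact rl_nonneg hα1 (le_trans hs.1.le hv.1)
  linarith

/-- Product integrability of the kernel times a weight in the first variable. -/
lemma ker_left {α T : ℝ} (hα1 : α < 1) {w : ℝ → ℝ}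
    (hw : Integrable w (volume.restrict (Ioc 0 T))) :
    Integrable (fun p : ℝ × ℝ =>
        {p : ℝ × ℝ | p.1 < p.2}.indicator
          (fun p => rlKernel (1 - α) (p.2 - p.1) * w p.1) p)
      ((volume.restrict (Ioc 0 T)).prod (volume.restrict (Ioc 0 T))) := by
  set μ := volume.restrict (Ioc (0:ℝ) T) with hμ
  have hS : MeasurableSet {p : ℝ × ℝ | p.1 < p.2} :=
    measurableSet_lt measurable_fst measurable_snd
  have hmeas : AEStronglyMeasurable
      (fun p : ℝ × ℝ => {p : ℝ × ℝ | p.1 < p.2}.indicator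
        (fun p => rlKernel (1 - α) (p.2 - p.1) * w p.1) p) (μ.prod μ) := by
    refine AEStronglyMeasurable.indicator ?_ hS
    exact (((rl_meas α).comp (measurable_snd.sub measurable_fst)).aestronglyMeasurable.mul
      hw.1.comp_fst)
  have hsec : ∀ u : ℝ, (fun s => {p : ℝ × ℝ | p.1 < p.2}.indicator
        (fun p => rlKernel (1 - α) (p.2 - p.1) * w p.1) (u, s))
      = fun s => ((Ioi u).indicator (fun s => rlKernel (1 - α) (s - u)) s) * w u := by
    intro u; funext s
    by_cases h : u < s <;> simp [Set.indicator_apply, h]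
  refine (integrable_prod_iff hmeas).2 ⟨?_, ?_⟩
  · filter_upwards [ae_restrict_mem measurableSet_Ioc] with u hu
    rw [hsec u]
    exact (fibR hα1 hu).mul_const _
  · refine Integrable.mono'
      (hw.norm.mul_const (∫ v in (0:ℝ)..T, rlKernel (1 - α) v))
      hmeas.norm.integral_prod_right' ?_
    filter_upwards [ae_restrict_mem measurableSet_Ioc] with u hu
    have h0 : 0 ≤ ∫ s, ‖{p : ℝ × ℝ | p.1 < p.2}.indicator
        (fun p => rlKernel (1 - α) (p.2 - p.1) * w p.1) (u, s)‖ ∂μ :=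
      integral_nonneg fun s => norm_nonneg _
    rw [Real.norm_of_nonneg h0]
    have heq : ∀ s : ℝ, ‖{p : ℝ × ℝ | p.1 < p.2}.indicator
          (fun p => rlKernel (1 - α) (p.2 - p.1) * w p.1) (u, s)‖
        = ‖(Ioi u).indicator (fun s => rlKernel (1 - α) (s - u)) s‖ * ‖w u‖ := by
      intro s
      rw [congrFun (hsec u) s]
      exact norm_mul _ _
    simp_rw [heq]
    rw [MeasureTheory.integral_mul_const]
    calc (∫ s, ‖(Ioi u).indicator (fun s => rlKernel (1 - α) (s - u)) s‖ ∂μ) * ‖w u‖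
        ≤ (∫ v in (0:ℝ)..T, rlKernel (1 - α) v) * ‖w u‖ :=
          mul_le_mul_of_nonneg_right (fibR_bound hα1 hu) (norm_nonneg _)
      _ = ‖w u‖ * ∫ v in (0:ℝ)..T, rlKernel (1 - α) v := mul_comm _ _

/-- Product integrability of the kernel times a weight in the second variable. -/
lemma ker_right {α T : ℝ} (hα1 : α < 1) {w : ℝ → ℝ}
    (hw : Integrable w (volume.restrict (Ioc 0 T))) :
    Integrable (fun p : ℝ × ℝ =>
        {p : ℝ × ℝ | p.1 < p.2}.indicator
          (fun p => rlKernel (1 - α) (p.2 - p.1) * w p.2) p)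
      ((volume.restrict (Ioc 0 T)).prod (volume.restrict (Ioc 0 T))) := by
  set μ := volume.restrict (Ioc (0:ℝ) T) with hμ
  have hS : MeasurableSet {p : ℝ × ℝ | p.1 < p.2} :=
    measurableSet_lt measurable_fst measurable_snd
  have hmeas : AEStronglyMeasurable
      (fun p : ℝ × ℝ => {p : ℝ × ℝ | p.1 < p.2}.indicator
        (fun p => rlKernel (1 - α) (p.2 - p.1) * w p.2) p) (μ.prod μ) := by
    refine AEStronglyMeasurable.indicator ?_ hS
    exact (((rl_meas α).comp (measurable_snd.sub measurable_fst)).aestronglyMeasurable.mul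
      hw.1.comp_snd)
  have hsec : ∀ s : ℝ, (fun u => {p : ℝ × ℝ | p.1 < p.2}.indicator
        (fun p => rlKernel (1 - α) (p.2 - p.1) * w p.2) (u, s))
      = fun u => ((Iio s).indicator (fun u => rlKernel (1 - α) (s - u)) u) * w s := by
    intro s; funext u
    by_cases h : u < s <;> simp [Set.indicator_apply, h]
  refine (integrable_prod_iff' hmeas).2 ⟨?_, ?_⟩
  · filter_upwards [ae_restrict_mem measurableSet_Ioc] with s hs
    rw [hsec s]
    exact (fibL hα1 hs).mul_const _
  · refine Integrable.mono'
      (hw.norm.mul_const (∫ v in (0:ℝ)..T, rlKernel (1 - α) v))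
      hmeas.norm.prod_swap.integral_prod_right' ?_
    filter_upwards [ae_restrict_mem measurableSet_Ioc] with s hs
    have h0 : 0 ≤ ∫ u, ‖{p : ℝ × ℝ | p.1 < p.2}.indicator
        (fun p => rlKernel (1 - α) (p.2 - p.1) * w p.2) (u, s)‖ ∂μ :=
      integral_nonneg fun u => norm_nonneg _
    rw [Real.norm_of_nonneg h0]
    have heq : ∀ u : ℝ, ‖{p : ℝ × ℝ | p.1 < p.2}.indicator
          (fun p => rlKernel (1 - α) (p.2 - p.1) * w p.2) (u, s)‖
        = ‖(Iio s).indicator (fun u => rlKernel (1 - α) (s - u)) u‖ * ‖w s‖ := by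
      intro u
      rw [congrFun (hsec s) u]
      exact norm_mul _ _
    simp_rw [heq]
    rw [MeasureTheory.integral_mul_const]
    calc (∫ u, ‖(Iio s).indicator (fun u => rlKernel (1 - α) (s - u)) u‖ ∂μ) * ‖w s‖
        ≤ (∫ v in (0:ℝ)..T, rlKernel (1 - α) v) * ‖w s‖ :=
          mul_le_mul_of_nonneg_right (fibL_bound hα1 hs) (norm_nonneg _)
      _ = ‖w s‖ * ∫ v in (0:ℝ)..T, rlKernel (1 - α) v := mul_comm _ _

variable {E : Type*} [NormedAddCommGroup E] [NormedSpace ℝ E]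

/-- Right sections of triangle-indicator integrals are interval integrals. -/
lemma secR {T : ℝ} (f : ℝ → ℝ → E) {t : ℝ} (ht : t ∈ Ioc (0:ℝ) T) :
    (∫ s, {p : ℝ × ℝ | p.1 < p.2}.indicator (fun p => f p.1 p.2) (t, s)
        ∂(volume.restrict (Ioc 0 T)))
      = ∫ s in t..T, f t s := by
  have h : (fun s => {p : ℝ × ℝ | p.1 < p.2}.indicator (fun p => f p.1 p.2) (t, s))
      = fun s => (Ioi t).indicator (f t) s := by
    funext s; by_cases h : t < s <;> simp [Set.indicator_apply, h]
  rw [h, setIntegral_indicator measurableSet_Ioi, inter_Ioi ht.1.le,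
    ← intervalIntegral.integral_of_le ht.2]

/-- Left sections of triangle-indicator integrals are interval integrals. -/
lemma secL {T : ℝ} (f : ℝ → ℝ → E) {s : ℝ} (hs : s ∈ Ioc (0:ℝ) T) :
    (∫ t, {p : ℝ × ℝ | p.1 < p.2}.indicator (fun p => f p.1 p.2) (t, s)
        ∂(volume.restrict (Ioc 0 T)))
      = ∫ t in (0:ℝ)..s, f t s := by
  have h : (fun t => {p : ℝ × ℝ | p.1 < p.2}.indicator (fun p => f p.1 p.2) (t, s))
      = fun t => (Iio s).indicator (fun t => f t s) t := by
    funext t; by_cases h : t < s <;> simp [Set.indicator_apply, h]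
  rw [h, setIntegral_indicator measurableSet_Iio, inter_Iio hs.2,
    ← integral_Ioc_eq_integral_Ioo, ← intervalIntegral.integral_of_le hs.1.le]

variable {H : Type*} [NormedAddCommGroup H] [InnerProductSpace ℝ H] [CompleteSpace H]

lemma inner_intervalIntegral_right {a b : ℝ} (hab : a ≤ b) {f : ℝ → H}
    (hf : IntegrableOn f (Ioc a b) volume) (c : H) :
    ⟪c, ∫ s in a..b, f s⟫ = ∫ s in a..b, ⟪c, f s⟫ := by
  rw [intervalIntegral.integral_of_le hab, intervalIntegral.integral_of_le hab]
  exact (integral_inner hf c).symm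

lemma inner_intervalIntegral_left {a b : ℝ} (hab : a ≤ b) {f : ℝ → H}
    (hf : IntegrableOn f (Ioc a b) volume) (c : H) :
    ⟪∫ s in a..b, f s, c⟫ = ∫ s in a..b, ⟪f s, c⟫ := by
  rw [real_inner_comm, inner_intervalIntegral_right hab hf c]
  simp_rw [real_inner_comm]

lemma sq_integrable {T : ℝ} {f : ℝ → H} (hf : MemLp f 2 (volume.restrict (Ioc (0:ℝ) T))) :
    Integrable (fun u => ‖f u‖ * ‖f u‖) (volume.restrict (Ioc (0:ℝ) T)) := by
  have h := hf.integrable_norm_rpow two_ne_zero ENNReal.ofNat_ne_top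
  refine h.congr (Filter.Eventually.of_forall fun u => ?_)
  have h2 : ((2:ENNReal)).toReal = (2:ℝ) := by simp
  simp only [h2, Real.rpow_two]
  ring

end FracIBP

open FracIBP Set

/-- Fractional integration by parts: for `φ₁ ∈ L²(0,T;H)` and `φ₂ ∈ H¹(0,T;H)`,
`∫₀ᵀ ⟨∂ₜ(g_{1−α}*φ₁), φ₂⟩ dt = −∫₀ᵀ ⟨φ₁, g_{1−α} *' ∂ₜφ₂⟩ dt
  + ⟨(g_{1−α}*φ₁)(T), φ₂(T)⟩ − ⟨(g_{1−α}*φ₁)(0), φ₂(0)⟩`. -/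
theorem fractional_integration_by_parts
    {H : Type*} [NormedAddCommGroup H] [InnerProductSpace ℝ H] [CompleteSpace H]
    (T α : ℝ) (hT : 0 < T) (hα0 : 0 < α) (hα1 : α < 1)
    (φ₁ : ℝ → H) (hφ₁ : MemLp φ₁ 2 (volume.restrict (Set.Ioc (0:ℝ) T)))
    -- `φ₂ ∈ H¹(0,T;H)`: absolutely continuous with `L²` derivative `φ₂'`
    (φ₂ φ₂' : ℝ → H) (hφ₂' : MemLp φ₂' 2 (volume.restrict (Set.Ioc (0:ℝ) T)))
    (hφ₂ : ∀ t ∈ Set.Icc (0:ℝ) T, φ₂ t = φ₂ 0 + ∫ s in (0:ℝ)..t, φ₂' s)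
    -- `g_{1−α}*φ₁` is absolutely continuous with `L²` derivative `K'`
    (K' : ℝ → H) (hK' : MemLp K' 2 (volume.restrict (Set.Ioc (0:ℝ) T)))
    (hK : ∀ t ∈ Set.Icc (0:ℝ) T,
      (∫ s in (0:ℝ)..t, rlKernel (1 - α) (t - s) • φ₁ s) =
        (∫ s in (0:ℝ)..(0:ℝ), rlKernel (1 - α) (0 - s) • φ₁ s) + ∫ s in (0:ℝ)..t, K' s) :
    (∫ t in (0:ℝ)..T, ⟪K' t, φ₂ t⟫) =
      -(∫ t in (0:ℝ)..T, ⟪φ₁ t, ∫ s in t..T, rlKernel (1 - α) (s - t) • φ₂' s⟫)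
        + ⟪∫ s in (0:ℝ)..T, rlKernel (1 - α) (T - s) • φ₁ s, φ₂ T⟫
        - ⟪∫ s in (0:ℝ)..(0:ℝ), rlKernel (1 - α) (0 - s) • φ₁ s, φ₂ 0⟫ := by
  classical
  have hfin : IsFiniteMeasure (volume.restrict (Set.Ioc (0:ℝ) T)) := ⟨by
    rw [Measure.restrict_apply_univ, Real.volume_Ioc]
    exact ENNReal.ofReal_lt_top⟩
  have h0T : (0:ℝ) ≤ T := hT.le
  have hTmem : T ∈ Set.Icc (0:ℝ) T := ⟨h0T, le_refl T⟩
  have hKi : ∀ t ∈ Set.Icc (0:ℝ) T,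
      (∫ s in (0:ℝ)..t, rlKernel (1 - α) (t - s) • φ₁ s) = ∫ s in (0:ℝ)..t, K' s := by
    intro t ht
    have h := hK t ht
    simpa using h
  have hK'int : Integrable K' (volume.restrict (Set.Ioc (0:ℝ) T)) := hK'.integrable one_le_two
  have hφ₁int : Integrable φ₁ (volume.restrict (Set.Ioc (0:ℝ) T)) := hφ₁.integrable one_le_two
  have hφ₂'int : Integrable φ₂' (volume.restrict (Set.Ioc (0:ℝ) T)) :=
    hφ₂'.integrable one_le_two
  have hφ₂'on : IntegrableOn φ₂' (Set.Ioc 0 T) volume := hφ₂'int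
  have hK'on0 : IntegrableOn K' (Set.Ioc 0 T) volume := hK'int
  have hφ₂'iiT : IntervalIntegrable φ₂' volume 0 T :=
    (intervalIntegrable_iff_integrableOn_Ioc_of_le h0T).mpr hφ₂'int
  have hφ₂'iile : ∀ t ∈ Set.Icc (0:ℝ) T, IntervalIntegrable φ₂' volume 0 t := fun t ht =>
    (intervalIntegrable_iff_integrableOn_Ioc_of_le ht.1).mpr
      (hφ₂'on.mono_set (Set.Ioc_subset_Ioc_right ht.2))
  set S : Set (ℝ × ℝ) := {p : ℝ × ℝ | p.1 < p.2} with hSdef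
  have hS : MeasurableSet S := measurableSet_lt measurable_fst measurable_snd
  set F₁ : ℝ × ℝ → ℝ := fun p => S.indicator (fun p => ⟪K' p.1, φ₂' p.2⟫) p with hF₁def
  set F₂ : ℝ × ℝ → ℝ :=
    fun p => S.indicator (fun p => rlKernel (1 - α) (p.2 - p.1) * ⟪φ₁ p.1, φ₂' p.2⟫) p
    with hF₂def
  have hF₁m : AEStronglyMeasurable F₁
      ((volume.restrict (Set.Ioc (0:ℝ) T)).prod (volume.restrict (Set.Ioc (0:ℝ) T))) :=
    AEStronglyMeasurable.indicator
      ((hK'.aestronglyMeasurable.comp_fst).inner (hφ₂'.aestronglyMeasurable.comp_snd)) hS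
  have hF₁ : Integrable F₁
      ((volume.restrict (Set.Ioc (0:ℝ) T)).prod (volume.restrict (Set.Ioc (0:ℝ) T))) := by
    refine Integrable.mono' (hK'int.norm.mul_prod hφ₂'int.norm) hF₁m
      (Filter.Eventually.of_forall fun p => ?_)
    by_cases h : p ∈ S
    · simp only [hF₁def, Set.indicator_of_mem h, Real.norm_eq_abs]
      exact abs_real_inner_le_norm _ _
    · simp only [hF₁def, Set.indicator_of_notMem h, norm_zero]
      exact mul_nonneg (norm_nonneg _) (norm_nonneg _)
  have hF₂m : AEStronglyMeasurable F₂
      ((volume.restrict (Set.Ioc (0:ℝ) T)).prod (volume.restrict (Set.Ioc (0:ℝ) T))) :=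
    AEStronglyMeasurable.indicator
      ((((rl_meas α).comp (measurable_snd.sub measurable_fst)).aestronglyMeasurable).mul
        ((hφ₁.aestronglyMeasurable.comp_fst).inner (hφ₂'.aestronglyMeasurable.comp_snd))) hS
  have hF₂ : Integrable F₂
      ((volume.restrict (Set.Ioc (0:ℝ) T)).prod (volume.restrict (Set.Ioc (0:ℝ) T))) := by
    refine Integrable.mono'
      ((ker_left (T := T) hα1 (sq_integrable hφ₁)).add
        (ker_right (T := T) hα1 (sq_integrable hφ₂')))
      hF₂m (Filter.Eventually.of_forall fun p => ?_)
    by_cases h : p ∈ S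
    · have hlt : p.1 < p.2 := h
      have hg : 0 ≤ rlKernel (1 - α) (p.2 - p.1) := rl_nonneg hα1 (by linarith)
      have h1 : |⟪φ₁ p.1, φ₂' p.2⟫| ≤ ‖φ₁ p.1‖ * ‖φ₂' p.2‖ := abs_real_inner_le_norm _ _
      simp only [hF₂def, Pi.add_apply, Set.indicator_of_mem h, Real.norm_eq_abs,
        Set.indicator_of_mem (show p ∈ {p : ℝ × ℝ | p.1 < p.2} from h)]
      rw [abs_mul, abs_of_nonneg hg]
      nlinarith [norm_nonneg (φ₁ p.1), norm_nonneg (φ₂' p.2),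
        abs_nonneg (⟪φ₁ p.1, φ₂' p.2⟫), sq_nonneg (‖φ₁ p.1‖ - ‖φ₂' p.2‖),
        mul_le_mul_of_nonneg_left h1 hg]
    · simp only [hF₂def, Pi.add_apply, Set.indicator_of_notMem h, norm_zero, add_zero, le_refl,
        Set.indicator_of_notMem (show p ∉ {p : ℝ × ℝ | p.1 < p.2} from h)]
  have hG : Integrable (fun p : ℝ × ℝ =>
      S.indicator (fun p => rlKernel (1 - α) (p.2 - p.1) • φ₁ p.1) p)
      ((volume.restrict (Set.Ioc (0:ℝ) T)).prod (volume.restrict (Set.Ioc (0:ℝ) T))) := by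
    refine Integrable.mono' (ker_left (T := T) hα1 hφ₁int.norm)
      (AEStronglyMeasurable.indicator
        ((((rl_meas α).comp (measurable_snd.sub measurable_fst)).aestronglyMeasurable).smul
          hφ₁.aestronglyMeasurable.comp_fst) hS)
      (Filter.Eventually.of_forall fun p => ?_)
    by_cases h : p ∈ S
    · have hlt : p.1 < p.2 := h
      have hg : 0 ≤ rlKernel (1 - α) (p.2 - p.1) := rl_nonneg hα1 (by linarith)
      simp only [Set.indicator_of_mem h, norm_smul, Real.norm_eq_abs, abs_of_nonneg hg, le_refl,
        Set.indicator_of_mem (show p ∈ {p : ℝ × ℝ | p.1 < p.2} from h)]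
    · simp only [Set.indicator_of_notMem h, norm_zero, le_refl,
        Set.indicator_of_notMem (show p ∉ {p : ℝ × ℝ | p.1 < p.2} from h)]
  have hG₂ : Integrable (fun p : ℝ × ℝ =>
      S.indicator (fun p => rlKernel (1 - α) (p.2 - p.1) • φ₂' p.2) p)
      ((volume.restrict (Set.Ioc (0:ℝ) T)).prod (volume.restrict (Set.Ioc (0:ℝ) T))) := by
    refine Integrable.mono' (ker_right (T := T) hα1 hφ₂'int.norm)
      (AEStronglyMeasurable.indicator
        ((((rl_meas α).comp (measurable_snd.sub measurable_fst)).aestronglyMeasurable).smul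
          hφ₂'.aestronglyMeasurable.comp_snd) hS)
      (Filter.Eventually.of_forall fun p => ?_)
    by_cases h : p ∈ S
    · have hlt : p.1 < p.2 := h
      have hg : 0 ≤ rlKernel (1 - α) (p.2 - p.1) := rl_nonneg hα1 (by linarith)
      simp only [Set.indicator_of_mem h, norm_smul, Real.norm_eq_abs, abs_of_nonneg hg, le_refl,
        Set.indicator_of_mem (show p ∈ {p : ℝ × ℝ | p.1 < p.2} from h)]
    · simp only [Set.indicator_of_notMem h, norm_zero, le_refl,
        Set.indicator_of_notMem (show p ∉ {p : ℝ × ℝ | p.1 < p.2} from h)]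
  -- Step 1: pointwise rewriting of the left-hand side
  have eqint : ∀ᵐ t ∂(volume.restrict (Set.Ioc (0:ℝ) T)),
      ⟪K' t, φ₂ t⟫ = ⟪K' t, φ₂ T⟫ - ∫ s, F₁ (t, s) ∂(volume.restrict (Set.Ioc (0:ℝ) T)) := by
    filter_upwards [ae_restrict_mem measurableSet_Ioc] with t ht
    have ht' : t ∈ Set.Icc (0:ℝ) T := ⟨ht.1.le, ht.2⟩
    have hsub : φ₂ T - φ₂ t = ∫ s in t..T, φ₂' s := by
      rw [hφ₂ T hTmem, hφ₂ t ht',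
        show (φ₂ 0 + ∫ s in (0:ℝ)..T, φ₂' s) - (φ₂ 0 + ∫ s in (0:ℝ)..t, φ₂' s)
          = (∫ s in (0:ℝ)..T, φ₂' s) - ∫ s in (0:ℝ)..t, φ₂' s by abel]
      exact integral_interval_sub_left hφ₂'iiT (hφ₂'iile t ht')
    have h2 : φ₂ t = φ₂ T - ∫ s in t..T, φ₂' s := by rw [← hsub]; abel
    rw [h2, inner_sub_right]
    congr 1
    rw [inner_intervalIntegral_right ht.2
      (hφ₂'on.mono_set (Set.Ioc_subset_Ioc_left ht.1.le)) (K' t)]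
    exact (secR (fun a b => ⟪K' a, φ₂' b⟫) ht).symm
  -- Step 2: the constant-inner term
  have hconst : (∫ t, ⟪K' t, φ₂ T⟫ ∂(volume.restrict (Set.Ioc (0:ℝ) T)))
      = ⟪∫ t, K' t ∂(volume.restrict (Set.Ioc (0:ℝ) T)), φ₂ T⟫ := by
    calc (∫ t, ⟪K' t, φ₂ T⟫ ∂(volume.restrict (Set.Ioc (0:ℝ) T)))
        = ∫ t, ⟪φ₂ T, K' t⟫ ∂(volume.restrict (Set.Ioc (0:ℝ) T)) :=
          integral_congr_ae (Filter.Eventually.of_forall fun t => real_inner_comm _ _)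
      _ = ⟪φ₂ T, ∫ t, K' t ∂(volume.restrict (Set.Ioc (0:ℝ) T))⟫ := integral_inner hK'int _
      _ = ⟪∫ t, K' t ∂(volume.restrict (Set.Ioc (0:ℝ) T)), φ₂ T⟫ := real_inner_comm _ _
  -- Step 3: first Fubini swap
  have swap1 : (∫ t, (∫ s, F₁ (t, s) ∂(volume.restrict (Set.Ioc (0:ℝ) T)))
        ∂(volume.restrict (Set.Ioc (0:ℝ) T)))
      = ∫ s, (∫ t, F₁ (t, s) ∂(volume.restrict (Set.Ioc (0:ℝ) T)))
        ∂(volume.restrict (Set.Ioc (0:ℝ) T)) :=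
    integral_integral_swap (f := fun t s => F₁ (t, s)) hF₁
  -- Step 4: inner fibers: convolution identity from hK
  have inner1 : ∀ᵐ s ∂(volume.restrict (Set.Ioc (0:ℝ) T)),
      (∫ t, F₁ (t, s) ∂(volume.restrict (Set.Ioc (0:ℝ) T)))
        = ∫ u, F₂ (u, s) ∂(volume.restrict (Set.Ioc (0:ℝ) T)) := by
    filter_upwards [ae_restrict_mem measurableSet_Ioc, hG.prod_left_ae] with s hs hGs
    have hs' : s ∈ Set.Icc (0:ℝ) T := ⟨hs.1.le, hs.2⟩
    have hK'on : IntegrableOn K' (Set.Ioc 0 s) volume :=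
      hK'on0.mono_set (Set.Ioc_subset_Ioc_right hs.2)
    have hGs' : IntegrableOn (fun u => rlKernel (1 - α) (s - u) • φ₁ u) (Set.Ioc 0 s)
        volume := by
      have h1 : (fun u => S.indicator (fun p => rlKernel (1 - α) (p.2 - p.1) • φ₁ p.1) (u, s))
          = fun u => (Set.Iio s).indicator (fun u => rlKernel (1 - α) (s - u) • φ₁ u) u := by
        funext u; by_cases h : u < s <;> simp [Set.indicator_apply, h, hSdef]
      rw [h1, integrable_indicator_iff measurableSet_Iio] at hGs
      have h2 : IntegrableOn (fun u => rlKernel (1 - α) (s - u) • φ₁ u) (Set.Ioo 0 s)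
          volume := by
        rwa [IntegrableOn, Measure.restrict_restrict measurableSet_Iio, Set.inter_comm,
          inter_Iio hs.2] at hGs
      exact h2.congr_set_ae Ioo_ae_eq_Ioc.symm
    calc (∫ t, F₁ (t, s) ∂(volume.restrict (Set.Ioc (0:ℝ) T)))
        = ∫ t in (0:ℝ)..s, ⟪K' t, φ₂' s⟫ := secL (fun a b => ⟪K' a, φ₂' b⟫) hs
      _ = ⟪∫ t in (0:ℝ)..s, K' t, φ₂' s⟫ :=
          (inner_intervalIntegral_left hs.1.le hK'on (φ₂' s)).symm
      _ = ⟪∫ u in (0:ℝ)..s, rlKernel (1 - α) (s - u) • φ₁ u, φ₂' s⟫ := by rw [hKi s hs']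
      _ = ∫ u in (0:ℝ)..s, ⟪rlKernel (1 - α) (s - u) • φ₁ u, φ₂' s⟫ :=
          inner_intervalIntegral_left hs.1.le hGs' (φ₂' s)
      _ = ∫ u in (0:ℝ)..s, rlKernel (1 - α) (s - u) * ⟪φ₁ u, φ₂' s⟫ := by
          simp_rw [real_inner_smul_left]
      _ = ∫ u, F₂ (u, s) ∂(volume.restrict (Set.Ioc (0:ℝ) T)) :=
          (secL (fun a b => rlKernel (1 - α) (b - a) * ⟪φ₁ a, φ₂' b⟫) hs).symm
  -- Step 5: second Fubini swap
  have swap2 : (∫ s, (∫ u, F₂ (u, s) ∂(volume.restrict (Set.Ioc (0:ℝ) T)))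
        ∂(volume.restrict (Set.Ioc (0:ℝ) T)))
      = ∫ u, (∫ s, F₂ (u, s) ∂(volume.restrict (Set.Ioc (0:ℝ) T)))
        ∂(volume.restrict (Set.Ioc (0:ℝ) T)) :=
    (integral_integral_swap (f := fun u s => F₂ (u, s)) hF₂).symm
  -- Step 6: recover the backward convolution
  have inner2 : ∀ᵐ u ∂(volume.restrict (Set.Ioc (0:ℝ) T)),
      (∫ s, F₂ (u, s) ∂(volume.restrict (Set.Ioc (0:ℝ) T)))
        = ⟪φ₁ u, ∫ s in u..T, rlKernel (1 - α) (s - u) • φ₂' s⟫ := by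
    filter_upwards [ae_restrict_mem measurableSet_Ioc, hG₂.prod_right_ae] with u hu hG₂u
    have hint : IntegrableOn (fun s => rlKernel (1 - α) (s - u) • φ₂' s) (Set.Ioc u T)
        volume := by
      have h1 : (fun s => S.indicator (fun p => rlKernel (1 - α) (p.2 - p.1) • φ₂' p.2) (u, s))
          = fun s => (Set.Ioi u).indicator (fun s => rlKernel (1 - α) (s - u) • φ₂' s) s := by
        funext s'; by_cases h : u < s' <;> simp [Set.indicator_apply, h, hSdef]
      rw [h1, integrable_indicator_iff measurableSet_Ioi] at hG₂u
      rwa [IntegrableOn, Measure.restrict_restrict measurableSet_Ioi, Set.inter_comm,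
        inter_Ioi hu.1.le] at hG₂u
    calc (∫ s, F₂ (u, s) ∂(volume.restrict (Set.Ioc (0:ℝ) T)))
        = ∫ s in u..T, rlKernel (1 - α) (s - u) * ⟪φ₁ u, φ₂' s⟫ :=
          secR (fun a b => rlKernel (1 - α) (b - a) * ⟪φ₁ a, φ₂' b⟫) hu
      _ = ∫ s in u..T, ⟪φ₁ u, rlKernel (1 - α) (s - u) • φ₂' s⟫ := by
          simp_rw [real_inner_smul_right]
      _ = ⟪φ₁ u, ∫ s in u..T, rlKernel (1 - α) (s - u) • φ₂' s⟫ :=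
          (inner_intervalIntegral_right hu.2 hint (φ₁ u)).symm
  -- Assemble
  have key : (∫ t in (0:ℝ)..T, ⟪K' t, φ₂ t⟫)
      = ⟪∫ t, K' t ∂(volume.restrict (Set.Ioc (0:ℝ) T)), φ₂ T⟫
        - ∫ u, ⟪φ₁ u, ∫ s in u..T, rlKernel (1 - α) (s - u) • φ₂' s⟫
            ∂(volume.restrict (Set.Ioc (0:ℝ) T)) := by
    calc (∫ t in (0:ℝ)..T, ⟪K' t, φ₂ t⟫)
        = ∫ t, ⟪K' t, φ₂ t⟫ ∂(volume.restrict (Set.Ioc (0:ℝ) T)) :=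
          intervalIntegral.integral_of_le h0T
      _ = ∫ t, (⟪K' t, φ₂ T⟫ - ∫ s, F₁ (t, s) ∂(volume.restrict (Set.Ioc (0:ℝ) T)))
            ∂(volume.restrict (Set.Ioc (0:ℝ) T)) := integral_congr_ae eqint
      _ = (∫ t, ⟪K' t, φ₂ T⟫ ∂(volume.restrict (Set.Ioc (0:ℝ) T)))
            - ∫ t, (∫ s, F₁ (t, s) ∂(volume.restrict (Set.Ioc (0:ℝ) T)))
                ∂(volume.restrict (Set.Ioc (0:ℝ) T)) :=
          integral_sub (hK'int.inner_const _) hF₁.integral_prod_left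
      _ = ⟪∫ t, K' t ∂(volume.restrict (Set.Ioc (0:ℝ) T)), φ₂ T⟫
            - ∫ s, (∫ t, F₁ (t, s) ∂(volume.restrict (Set.Ioc (0:ℝ) T)))
                ∂(volume.restrict (Set.Ioc (0:ℝ) T)) := by rw [hconst, swap1]
      _ = ⟪∫ t, K' t ∂(volume.restrict (Set.Ioc (0:ℝ) T)), φ₂ T⟫
            - ∫ s, (∫ u, F₂ (u, s) ∂(volume.restrict (Set.Ioc (0:ℝ) T)))
                ∂(volume.restrict (Set.Ioc (0:ℝ) T)) := by
          rw [integral_congr_ae inner1]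
      _ = ⟪∫ t, K' t ∂(volume.restrict (Set.Ioc (0:ℝ) T)), φ₂ T⟫
            - ∫ u, (∫ s, F₂ (u, s) ∂(volume.restrict (Set.Ioc (0:ℝ) T)))
                ∂(volume.restrict (Set.Ioc (0:ℝ) T)) := by rw [swap2]
      _ = ⟪∫ t, K' t ∂(volume.restrict (Set.Ioc (0:ℝ) T)), φ₂ T⟫
            - ∫ u, ⟪φ₁ u, ∫ s in u..T, rlKernel (1 - α) (s - u) • φ₂' s⟫
                ∂(volume.restrict (Set.Ioc (0:ℝ) T)) := by
          rw [integral_congr_ae inner2]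
  rw [key]
  simp only [intervalIntegral.integral_same, inner_zero_left, sub_zero]
  rw [hKi T hTmem, intervalIntegral.integral_of_le h0T,
    intervalIntegral.integral_of_le h0T]
  ring
end
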